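/- arXiv:2604.07186 — 7 statements merged into one kernel-verified Lean document; each statement's English description precedes it below -/
import Mathlib

section
/- Let (α_{n,N})_{n,N∈ℕ} and (β_{n,N})_{n,N∈ℕ} be nonnegative doubly indexed sequences, summable in n for each fixed N, and let (I_N)_{N∈ℕ} be a sequence of intervals of natural numbers, such that lim_{N→∞} ∑_{n∈ℕ} β_{n,N} = lim_{N→∞} ∑_{n∈ℕ} α_{n,N} = lim_{N→∞} ∑_{n∈I_N} α_{n,N} = 1. Assume α_{n,N} > 0 for all N ∈ ℕ and n ∈ I_N, and that there is a function E : ℕ → ℝ with E(N) → 0 such that |1 − β_{n,N}/α_{n,N}| ≤ E(N) for all N ∈ ℕ and n ∈ I_N. Then the supremum, over all functions f : ℕ → ℂ with ‖f‖∞ ≤ 1, of | ∑_{n∈ℕ} α_{n,N} f(n) − ∑_{n∈ℕ} β_{n,N} f(n) | tends to 0 as N → ∞. -/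
open Filter Finset

/-- Discrete derivative: `ΔW(N) = W(N) - W(N-1)` for `N ≥ 2`, and `ΔW(1) = W(1)`. -/
noncomputable def dd (W : ℕ → ℝ) (N : ℕ) : ℝ := if 2 ≤ N then W N - W (N - 1) else W 1

/-- Weighted average `E^W_{n ≤ N} f(n) = (1/W(N)) ∑_{n=1}^N ΔW(n) f(n)`. -/
noncomputable def wAvg (W : ℕ → ℝ) (f : ℕ → ℂ) (N : ℕ) : ℂ :=
  (1 / (W N : ℂ)) * ∑ n ∈ Finset.Icc 1 N, (dd W n : ℂ) * f n

/-- Cesàro average `E_{n ≤ N} f(n) = (1/N) ∑_{n=1}^N f(n)`. -/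
noncomputable def cesaro (f : ℕ → ℂ) (N : ℕ) : ℂ :=
  (1 / (N : ℂ)) * ∑ n ∈ Finset.Icc 1 N, f n

/-- Parity-neutral binomial mean. -/
noncomputable def e2bin (f : ℕ → ℂ) (N : ℕ) : ℂ :=
  (1 / 2 ^ (N + 1) : ℂ) * ∑ n ∈ Finset.Icc 1 (2 * N), (Nat.choose N (n / 2) : ℂ) * f n

/-- Binomial mean. -/
noncomputable def ebin (f : ℕ → ℂ) (N : ℕ) : ℂ :=
  (1 / 2 ^ N : ℂ) * ∑ n ∈ Finset.Icc 1 N, (Nat.choose N n : ℂ) * f n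

/-- The class 𝒲: eventually non-decreasing nonnegative functions tending to ∞. -/
def memW (W : ℕ → ℝ) : Prop :=
  (∀ n, 0 ≤ W n) ∧ (∃ N₀ : ℕ, ∀ m n : ℕ, N₀ ≤ m → m ≤ n → W m ≤ W n) ∧
    Tendsto W atTop atTop

/-- The class 𝒲*: members of 𝒲 for which `N·Δ²W(N)/ΔW(N)` converges in `ℝ ∪ {±∞}`. -/
def memWstar (W : ℕ → ℝ) : Prop :=
  memW W ∧ ∃ l : EReal,
    Tendsto (fun N : ℕ => (((N : ℝ) * dd (dd W) N / dd W N : ℝ) : EReal)) atTop (nhds l)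

/-- The class ℒ: members of 𝒲 (with values in ℕ) whose discrete derivative is
eventually in {0,1}. -/
def memL (L : ℕ → ℕ) : Prop :=
  memW (fun n => (L n : ℝ)) ∧
    ∃ N₀ : ℕ, ∀ n : ℕ, N₀ ≤ n → L n = L (n - 1) ∨ L n = L (n - 1) + 1

/-- Gaussian probability density with mean μ and standard deviation σ. -/
noncomputable def gauss (x μ σ : ℝ) : ℝ :=
  (1 / (σ * Real.sqrt (2 * Real.pi))) * Real.exp (-(x - μ) ^ 2 / (2 * σ ^ 2))

/-- The Gaussian condition \eqref{gaussian_condition}. -/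
def gaussCond (ϑ : ℕ → ℕ) (L : ℕ → ℕ) : Prop :=
  Tendsto (fun N : ℕ => ∑' k : ℕ,
      |(((Finset.Icc 1 N).filter (fun n => ϑ n = k + 1)).card : ℝ) / N -
        gauss (k + 1 : ℝ) (L N) (Real.sqrt (L N))|) atTop (nhds 0)

/-- Ω(n): number of prime factors with multiplicity. -/
def bigOmega (n : ℕ) : ℕ := n.primeFactorsList.length

/-- ω(n): number of distinct prime factors. -/
def smallOmega (n : ℕ) : ℕ := n.primeFactors.card

/-- Uniform distribution mod 1. -/
def udMod1 (x : ℕ → ℝ) : Prop :=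
  ∀ a b : ℝ, 0 ≤ a → a < b → b ≤ 1 →
    Tendsto (fun N : ℕ =>
        (((Finset.Icc 1 N).filter
            (fun n => a ≤ Int.fract (x n) ∧ Int.fract (x n) < b)).card : ℝ) / N)
      atTop (nhds (b - a))

/-- Lemma on changing weights. Here `α N n` denotes `α_{n,N}`, sums over
`n ∈ ℕ` range over the positive integers (written as `n+1` for `n : ℕ`). -/
theorem stmt7 (α β : ℕ → ℕ → ℝ) (I : ℕ → Finset ℕ) (E : ℕ → ℝ)
    (hα0 : ∀ N n, 0 ≤ α N n) (hβ0 : ∀ N n, 0 ≤ β N n)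
    (hαs : ∀ N, Summable (fun n : ℕ => α N (n + 1)))
    (hβs : ∀ N, Summable (fun n : ℕ => β N (n + 1)))
    (hI : ∀ N, ∃ a b : ℕ, 1 ≤ a ∧ I N = Finset.Icc a b)
    (hβ1 : Tendsto (fun N : ℕ => ∑' n : ℕ, β N (n + 1)) atTop (nhds 1))
    (hα1 : Tendsto (fun N : ℕ => ∑' n : ℕ, α N (n + 1)) atTop (nhds 1))
    (hαI : Tendsto (fun N : ℕ => ∑ n ∈ I N, α N n) atTop (nhds 1))
    (hαpos : ∀ N, ∀ n ∈ I N, 0 < α N n)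
    (hE : Tendsto E atTop (nhds 0))
    (hEbd : ∀ N, ∀ n ∈ I N, |1 - β N n / α N n| ≤ E N) :
    ∀ ε : ℝ, 0 < ε → ∀ᶠ N : ℕ in atTop, ∀ f : ℕ → ℂ, (∀ n, ‖f n‖ ≤ 1) →
      ‖(∑' n : ℕ, (α N (n + 1) : ℂ) * f (n + 1)) -
        ∑' n : ℕ, (β N (n + 1) : ℂ) * f (n + 1)‖ < ε := by
  intro ε hε
  -- the quantitative bound
  have hEabs : Tendsto (fun N => |E N|) atTop (nhds 0) := by
    simpa using hE.abs
  have hg : Tendsto (fun N : ℕ =>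
      |E N| * (∑ n ∈ I N, α N n) + ((∑' n : ℕ, α N (n + 1)) - ∑ n ∈ I N, α N n) +
        ((∑' n : ℕ, β N (n + 1)) - (1 - |E N|) * ∑ n ∈ I N, α N n)) atTop (nhds 0) := by
    have := ((hEabs.mul hαI).add (hα1.sub hαI)).add
      (hβ1.sub (((tendsto_const_nhds (x := (1:ℝ))).sub hEabs).mul hαI))
    simpa using this
  filter_upwards [hg.eventually_lt_const hε] with N hN f hf
  refine lt_of_le_of_lt ?_ hN
  -- setup for fixed N
  obtain ⟨a, b, ha, hIab⟩ := hI N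
  have hpos1 : ∀ m ∈ I N, 1 ≤ m := by
    intro m hm
    rw [hIab, Finset.mem_Icc] at hm
    omega
  set s : Finset ℕ := (I N).image (fun n => n - 1) with hs
  have hmem : ∀ n : ℕ, n ∈ s ↔ n + 1 ∈ I N := by
    intro n
    simp only [hs, Finset.mem_image]
    constructor
    · rintro ⟨m, hm, rfl⟩
      have := hpos1 m hm
      have : m - 1 + 1 = m := by omega
      rwa [this]
    · intro h
      exact ⟨n + 1, h, by omega⟩
  have hinj : ∀ m ∈ I N, ∀ m' ∈ I N, m - 1 = m' - 1 → m = m' := by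
    intro m hm m' hm' hmm
    have h1 := hpos1 m hm
    have h2 := hpos1 m' hm'
    omega
  have hsum_eq : ∀ h : ℕ → ℝ, ∑ n ∈ s, h (n + 1) = ∑ m ∈ I N, h m := by
    intro h
    rw [hs, Finset.sum_image hinj]
    exact Finset.sum_congr rfl fun m hm => by rw [Nat.sub_add_cancel (hpos1 m hm)]
  have hαsN := hαs N
  have hβsN := hβs N
  have hd : Summable (fun n : ℕ => |α N (n + 1) - β N (n + 1)|) := (hαsN.sub hβsN).abs
  -- summability of the complex series
  have hfa : Summable (fun n : ℕ => (α N (n + 1) : ℂ) * f (n + 1)) := by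
    apply Summable.of_norm_bounded hαsN
    intro n
    rw [norm_mul, Complex.norm_real, Real.norm_eq_abs, abs_of_nonneg (hα0 N (n + 1))]
    calc α N (n + 1) * ‖f (n + 1)‖ ≤ α N (n + 1) * 1 :=
          mul_le_mul_of_nonneg_left (hf _) (hα0 N (n + 1))
      _ = α N (n + 1) := mul_one _
  have hfb : Summable (fun n : ℕ => (β N (n + 1) : ℂ) * f (n + 1)) := by
    apply Summable.of_norm_bounded hβsN
    intro n
    rw [norm_mul, Complex.norm_real, Real.norm_eq_abs, abs_of_nonneg (hβ0 N (n + 1))]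
    calc β N (n + 1) * ‖f (n + 1)‖ ≤ β N (n + 1) * 1 :=
          mul_le_mul_of_nonneg_left (hf _) (hβ0 N (n + 1))
      _ = β N (n + 1) := mul_one _
  -- pointwise norm bound
  have hptw : ∀ n : ℕ, ‖(α N (n + 1) : ℂ) * f (n + 1) - (β N (n + 1) : ℂ) * f (n + 1)‖
      ≤ |α N (n + 1) - β N (n + 1)| := by
    intro n
    rw [← sub_mul]
    rw [norm_mul]
    have : ((α N (n + 1) : ℂ) - (β N (n + 1) : ℂ)) = ((α N (n + 1) - β N (n + 1) : ℝ) : ℂ) := by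
      push_cast; ring
    rw [this, Complex.norm_real, Real.norm_eq_abs]
    calc |α N (n + 1) - β N (n + 1)| * ‖f (n + 1)‖
        ≤ |α N (n + 1) - β N (n + 1)| * 1 :=
          mul_le_mul_of_nonneg_left (hf _) (abs_nonneg _)
      _ = _ := mul_one _
  have hnorm_sum : Summable (fun n : ℕ =>
      ‖(α N (n + 1) : ℂ) * f (n + 1) - (β N (n + 1) : ℂ) * f (n + 1)‖) :=
    Summable.of_nonneg_of_le (fun n => norm_nonneg _) hptw hd
  -- step 1: norm of difference ≤ tsum of |α - β|
  have step1 : ‖(∑' n : ℕ, (α N (n + 1) : ℂ) * f (n + 1)) -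
      ∑' n : ℕ, (β N (n + 1) : ℂ) * f (n + 1)‖ ≤ ∑' n : ℕ, |α N (n + 1) - β N (n + 1)| := by
    rw [← Summable.tsum_sub hfa hfb]
    calc ‖∑' n : ℕ, ((α N (n + 1) : ℂ) * f (n + 1) - (β N (n + 1) : ℂ) * f (n + 1))‖
        ≤ ∑' n : ℕ, ‖(α N (n + 1) : ℂ) * f (n + 1) - (β N (n + 1) : ℂ) * f (n + 1)‖ :=
          norm_tsum_le_tsum_norm hnorm_sum
      _ ≤ ∑' n : ℕ, |α N (n + 1) - β N (n + 1)| := Summable.tsum_le_tsum hptw hnorm_sum hd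
  -- split the tsum over s and its complement
  have hsplit : (∑ n ∈ s, |α N (n + 1) - β N (n + 1)|) +
      (∑' n : {n : ℕ // n ∉ s}, |α N (↑n + 1) - β N (↑n + 1)|) =
      ∑' n : ℕ, |α N (n + 1) - β N (n + 1)| := Summable.sum_add_tsum_compl (s := s) hd
  -- bound on s
  have hInner : ∀ n ∈ s, |α N (n + 1) - β N (n + 1)| ≤ |E N| * α N (n + 1) := by
    intro n hn
    have hnI : n + 1 ∈ I N := (hmem n).1 hn
    have hap : 0 < α N (n + 1) := hαpos N _ hnI
    have hEb : |1 - β N (n + 1) / α N (n + 1)| ≤ E N := hEbd N _ hnI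
    have key : α N (n + 1) - β N (n + 1) = α N (n + 1) * (1 - β N (n + 1) / α N (n + 1)) := by
      field_simp
    rw [key, abs_mul, abs_of_pos hap]
    have : |1 - β N (n + 1) / α N (n + 1)| ≤ |E N| := le_trans hEb (le_abs_self _)
    calc α N (n + 1) * |1 - β N (n + 1) / α N (n + 1)| ≤ α N (n + 1) * |E N| :=
          mul_le_mul_of_nonneg_left this hap.le
      _ = |E N| * α N (n + 1) := mul_comm _ _
  have hs_bound : ∑ n ∈ s, |α N (n + 1) - β N (n + 1)| ≤ |E N| * ∑ m ∈ I N, α N m := by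
    calc ∑ n ∈ s, |α N (n + 1) - β N (n + 1)| ≤ ∑ n ∈ s, |E N| * α N (n + 1) :=
          Finset.sum_le_sum hInner
      _ = |E N| * ∑ n ∈ s, α N (n + 1) := by rw [Finset.mul_sum]
      _ = |E N| * ∑ m ∈ I N, α N m := by rw [hsum_eq (fun m => α N m)]
  -- bound on complement
  have hαc : (∑ n ∈ s, α N (n + 1)) + (∑' n : {n : ℕ // n ∉ s}, α N (↑n + 1)) =
      ∑' n : ℕ, α N (n + 1) := Summable.sum_add_tsum_compl (s := s) hαsN
  have hβc : (∑ n ∈ s, β N (n + 1)) + (∑' n : {n : ℕ // n ∉ s}, β N (↑n + 1)) =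
      ∑' n : ℕ, β N (n + 1) := Summable.sum_add_tsum_compl (s := s) hβsN
  have hβ_lower : (1 - |E N|) * ∑ m ∈ I N, α N m ≤ ∑ n ∈ s, β N (n + 1) := by
    rw [← hsum_eq (fun m => α N m), Finset.mul_sum]
    apply Finset.sum_le_sum
    intro n hn
    have hnI : n + 1 ∈ I N := (hmem n).1 hn
    have hap : 0 < α N (n + 1) := hαpos N _ hnI
    have hEb : |1 - β N (n + 1) / α N (n + 1)| ≤ E N := hEbd N _ hnI
    have h1 : 1 - β N (n + 1) / α N (n + 1) ≤ |E N| :=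
      le_trans (le_abs_self _) (le_trans hEb (le_abs_self _))
    have h2 : (1 - |E N|) * α N (n + 1) ≤ (β N (n + 1) / α N (n + 1)) * α N (n + 1) := by
      apply mul_le_mul_of_nonneg_right _ hap.le
      linarith
    calc (1 - |E N|) * α N (n + 1) ≤ (β N (n + 1) / α N (n + 1)) * α N (n + 1) := h2
      _ = β N (n + 1) := by field_simp
  have hc_bound : (∑' n : {n : ℕ // n ∉ s}, |α N (↑n + 1) - β N (↑n + 1)|)
      ≤ (∑' n : {n : ℕ // n ∉ s}, α N (↑n + 1)) + ∑' n : {n : ℕ // n ∉ s}, β N (↑n + 1) := by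
    have hadd : (∑' n : {n : ℕ // n ∉ s}, (α N (↑n + 1) + β N (↑n + 1))) =
        (∑' n : {n : ℕ // n ∉ s}, α N (↑n + 1)) +
          ∑' n : {n : ℕ // n ∉ s}, β N (↑n + 1) :=
      Summable.tsum_add (hαsN.subtype _) (hβsN.subtype _)
    rw [← hadd]
    apply Summable.tsum_le_tsum _ (hd.subtype _) ((hαsN.subtype _).add (hβsN.subtype _))
    intro n
    have h1 := hα0 N (↑n + 1)
    have h2 := hβ0 N (↑n + 1)
    have h3 : |α N (↑n + 1) - β N (↑n + 1)| ≤ α N (↑n + 1) + β N (↑n + 1) := by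
      rw [abs_sub_le_iff]
      constructor <;> linarith
    exact h3
  -- combine
  have e1 : (∑' n : {n : ℕ // n ∉ s}, α N (↑n + 1)) =
      (∑' n : ℕ, α N (n + 1)) - ∑ m ∈ I N, α N m := by
    have := hsum_eq (fun m => α N m)
    linarith [hαc]
  have e2 : (∑' n : {n : ℕ // n ∉ s}, β N (↑n + 1)) =
      (∑' n : ℕ, β N (n + 1)) - ∑ n ∈ s, β N (n + 1) := by
    linarith [hβc]
  calc ‖(∑' n : ℕ, (α N (n + 1) : ℂ) * f (n + 1)) -
      ∑' n : ℕ, (β N (n + 1) : ℂ) * f (n + 1)‖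
      ≤ ∑' n : ℕ, |α N (n + 1) - β N (n + 1)| := step1
    _ = (∑ n ∈ s, |α N (n + 1) - β N (n + 1)|) +
        ∑' n : {n : ℕ // n ∉ s}, |α N (↑n + 1) - β N (↑n + 1)| := hsplit.symm
    _ ≤ |E N| * (∑ n ∈ I N, α N n) + ((∑' n : ℕ, α N (n + 1)) - ∑ n ∈ I N, α N n) +
        ((∑' n : ℕ, β N (n + 1)) - (1 - |E N|) * ∑ n ∈ I N, α N n) := by
        have := hc_bound
        rw [e1, e2] at this
        have hβs' := hβ_lower
        linarith [hs_bound]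
end

section
/- Let W ∈ 𝒲 be such that lim_{N→∞} ΔW(N)/W(N) exists and is positive. Let f : ℕ → ℂ and ℓ ∈ ℂ. If E^W_{n≤N} f(n) → ℓ as N → ∞, then f(N) → ℓ as N → ∞. -/
open Filter Finset

/-- Lemma 3.3: if `W ∈ 𝒲` and `ΔW(N)/W(N)` converges to a positive limit,
then convergence of the `W`-averages of `f` to `ℓ` implies `f(N) → ℓ`. -/
theorem stmt8 (W : ℕ → ℝ) (hW : memW W) (l : ℝ) (hl : 0 < l)
    (hlim : Tendsto (fun N : ℕ => dd W N / W N) atTop (nhds l))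
    (f : ℕ → ℂ) (ℓ : ℂ)
    (havg : Tendsto (fun N : ℕ => wAvg W f N) atTop (nhds ℓ)) :
    Tendsto f atTop (nhds ℓ) := by
  obtain ⟨hW0, hmono, htop⟩ := hW
  have hWpos : ∀ᶠ N in atTop, 1 ≤ W N := htop.eventually (eventually_ge_atTop 1)
  have hratio : ∀ᶠ N in atTop, l / 2 < dd W N / W N :=
    hlim.eventually (lt_mem_nhds (show l / 2 < l by linarith))
  have hdd : ∀ᶠ N in atTop, 0 < dd W N := by
    filter_upwards [hWpos, hratio] with N h1 h2
    have hw : 0 < W N := lt_of_lt_of_le one_pos h1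
    have h3 : 0 < dd W N / W N := lt_trans (by linarith) h2
    have := mul_pos h3 hw
    rwa [div_mul_cancel₀ _ hw.ne'] at this
  have havg' : Tendsto (fun N => wAvg W f (N - 1)) atTop (nhds ℓ) :=
    havg.comp (tendsto_sub_atTop_nat 1)
  have hq : Tendsto (fun N => W N / dd W N) atTop (nhds l⁻¹) := by
    have := (hlim.inv₀ hl.ne')
    refine this.congr fun N => ?_
    exact inv_div _ _
  have hqC : Tendsto (fun N => ((W N / dd W N : ℝ) : ℂ)) atTop (nhds ((l⁻¹ : ℝ) : ℂ)) :=
    (Complex.continuous_ofReal.tendsto _).comp hq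
  have hg : Tendsto (fun N => wAvg W f N * ((W N / dd W N : ℝ) : ℂ)
      - wAvg W f (N - 1) * (((W N / dd W N : ℝ) : ℂ) - 1)) atTop
      (nhds (ℓ * ((l⁻¹ : ℝ) : ℂ) - ℓ * (((l⁻¹ : ℝ) : ℂ) - 1))) :=
    (havg.mul hqC).sub (havg'.mul (hqC.sub tendsto_const_nhds))
  have hkey : ℓ * ((l⁻¹ : ℝ) : ℂ) - ℓ * (((l⁻¹ : ℝ) : ℂ) - 1) = ℓ := by ring
  rw [hkey] at hg
  refine hg.congr' ?_
  rw [eventually_atTop] at hWpos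
  obtain ⟨M, hM⟩ := hWpos
  filter_upwards [hdd, eventually_ge_atTop (M + 2)] with N hd hN
  have h2 : 2 ≤ N := by omega
  have hw : 0 < W N := lt_of_lt_of_le one_pos (hM N (by omega))
  have hw' : 0 < W (N - 1) := lt_of_lt_of_le one_pos (hM (N - 1) (by omega))
  have hddeq : dd W N = W N - W (N - 1) := by simp [dd, h2]
  have hN1 : N - 1 + 1 = N := by omega
  have hsum : (∑ n ∈ Finset.Icc 1 N, (dd W n : ℂ) * f n)
      = (∑ n ∈ Finset.Icc 1 (N - 1), (dd W n : ℂ) * f n) + (dd W N : ℂ) * f N := by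
    have h := Finset.sum_Icc_succ_top (a := 1) (b := N - 1) (by omega)
      (fun n => (dd W n : ℂ) * f n)
    rw [hN1] at h
    exact h
  have ha : ((W N : ℝ) : ℂ) ≠ 0 := Complex.ofReal_ne_zero.mpr hw.ne'
  have hb : ((W (N - 1) : ℝ) : ℂ) ≠ 0 := Complex.ofReal_ne_zero.mpr hw'.ne'
  have hdne : ((dd W N : ℝ) : ℂ) ≠ 0 := Complex.ofReal_ne_zero.mpr hd.ne'
  have hb' : ((W (N - 1) : ℝ) : ℂ) = ((W N : ℝ) : ℂ) - ((dd W N : ℝ) : ℂ) := by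
    rw [hddeq]
    push_cast
    ring
  have hab : ((W N : ℝ) : ℂ) - ((dd W N : ℝ) : ℂ) ≠ 0 := hb' ▸ hb
  simp only [wAvg, hsum]
  push_cast
  rw [hb']
  field_simp
  ring
end

section
/- Let W ∈ 𝒲* and suppose log W(N)/log N → 0 as N → ∞. Then: (1) W(N−1)/W(N) → 1; (2) N·Δ²W(N+1)/ΔW(N) → −1; and (3) N·ΔW(N)/W(N) → 0, as N → ∞. -/
open Filter Finset

lemma exp_le_inv_one_sub {x : ℝ} (hx : x < 1) : Real.exp x ≤ (1 - x)⁻¹ := by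
  have h1 : 0 < 1 - x := by linarith
  rw [le_inv_comm₀ (Real.exp_pos x) h1]
  calc (1 - x) = -x + 1 := by ring
    _ ≤ Real.exp (-x) := Real.add_one_le_exp (-x)
    _ = (Real.exp x)⁻¹ := by rw [Real.exp_neg]

lemma bern01 {p x : ℝ} (hp0 : 0 ≤ p) (hp1 : p ≤ 1) (hx : 0 ≤ x) :
    (1 + x) ^ p ≤ 1 + p * x :=
  rpow_one_add_le_one_add_mul_self (by linarith) hp0 hp1

lemma lemA {δ x : ℝ} (hδ : 0 ≤ δ) (hx : 2 ≤ x) : 1 + δ / x ≤ (x / (x - 1)) ^ δ := by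
  have hx1 : (0:ℝ) < x - 1 := by linarith
  have hx0 : (0:ℝ) < x := by linarith
  have hb : (0:ℝ) < x / (x - 1) := by positivity
  have hlog : 1 / x ≤ Real.log (x / (x - 1)) := by
    have h := Real.log_le_sub_one_of_pos (show (0:ℝ) < (x-1)/x by positivity)
    have h2 : Real.log ((x-1)/x) = - Real.log (x/(x-1)) := by
      rw [← Real.log_inv]; congr 1; field_simp
    rw [h2] at h
    have h3 : (x-1)/x - 1 = -(1/x) := by field_simp; ring
    rw [h3] at h; linarith
  have e1 : 1 + δ / x ≤ Real.exp (δ / x) := by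
    have := Real.add_one_le_exp (δ/x); linarith
  have e2 : Real.exp (δ / x) ≤ Real.exp (Real.log (x/(x-1)) * δ) := by
    apply Real.exp_le_exp.mpr
    rw [mul_comm]
    have h5 : δ / x = δ * (1/x) := by ring
    rw [h5]
    exact mul_le_mul_of_nonneg_left hlog hδ
  calc 1 + δ / x ≤ Real.exp (Real.log (x/(x-1)) * δ) := e1.trans e2
    _ = (x / (x-1)) ^ δ := (Real.rpow_def_of_pos hb δ).symm

lemma lemT1 {ε x : ℝ} (hε0 : 0 < ε) (hε1 : ε ≤ 1) (hx : 0 < x) :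
    (x + 1) ^ ε ≤ x ^ ε + ε * x ^ (ε - 1) := by
  have h1 : x + 1 = x * (1 + 1/x) := by field_simp
  have h2 : (x+1) ^ ε = x ^ ε * (1 + 1/x) ^ ε := by
    rw [h1, Real.mul_rpow hx.le (by positivity)]
  have h3 : (1 + 1/x) ^ ε ≤ 1 + ε * (1/x) := bern01 hε0.le hε1 (by positivity)
  have h4 : x ^ (ε - 1) = x ^ ε / x := by
    rw [Real.rpow_sub hx, Real.rpow_one]
  rw [h2, h4]
  have hxε : (0:ℝ) ≤ x ^ ε := (Real.rpow_pos_of_pos hx ε).le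
  calc x ^ ε * (1 + 1/x) ^ ε ≤ x ^ ε * (1 + ε * (1/x)) :=
        mul_le_mul_of_nonneg_left h3 hxε
    _ = x ^ ε + ε * (x ^ ε / x) := by field_simp

lemma lemT2 {q x : ℝ} (h0 : 0 < q) (hx : 2 ≤ x) :
    q * x ^ (-(1+q)) ≤ (x-1) ^ (-q) - x ^ (-q) := by
  have hx0 : (0:ℝ) < x := by linarith
  have hx1 : (0:ℝ) < x - 1 := by linarith
  have key : 1 + q / x ≤ (x/(x-1)) ^ q := lemA h0.le hx
  have e1 : (x-1) ^ (-q) = x ^ (-q) * (x/(x-1)) ^ q := by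
    rw [Real.div_rpow hx0.le hx1.le, Real.rpow_neg hx0.le, Real.rpow_neg hx1.le]
    have hxq : x ^ q ≠ 0 := (Real.rpow_pos_of_pos hx0 q).ne'
    have hx1q : (x-1) ^ q ≠ 0 := (Real.rpow_pos_of_pos hx1 q).ne'
    field_simp
  have e2 : x ^ (-(1+q)) = x ^ (-q) / x := by
    rw [show -(1+q) = -q - 1 by ring, Real.rpow_sub hx0, Real.rpow_one]
  have hxnq : (0:ℝ) < x ^ (-q) := Real.rpow_pos_of_pos hx0 _
  rw [e1, e2]
  calc q * (x ^ (-q) / x) = x ^ (-q) * (q / x) := by ring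
    _ ≤ x ^ (-q) * ((x/(x-1))^q - 1) := by
        apply mul_le_mul_of_nonneg_left _ hxnq.le; linarith
    _ = x ^ (-q) * (x/(x-1))^q - x ^ (-q) := by ring

lemma lemB {θ δ x : ℝ} (h0 : 0 < θ) (hθδ : θ < δ)
    (hx : (δ*(1+θ))/(δ-θ) + θ + 2 ≤ x) : (1 + 1/(x-1))^θ ≤ 1 + δ/x := by
  have hδ0 : 0 < δ := h0.trans hθδ
  have hd : 0 < δ - θ := by linarith
  have hxθ : θ + 2 ≤ x := by
    have : 0 ≤ (δ*(1+θ))/(δ-θ) := by positivity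
    linarith
  have hx1 : (0:ℝ) < x - 1 := by linarith
  have hx0 : (0:ℝ) < x := by linarith
  have hx1θ : (0:ℝ) < x - 1 - θ := by linarith
  have hb : (0:ℝ) < 1 + 1/(x-1) := by positivity
  have e0 : (1 + 1/(x-1))^θ = Real.exp (Real.log (1 + 1/(x-1)) * θ) :=
    Real.rpow_def_of_pos hb θ
  have e1 : Real.log (1 + 1/(x-1)) ≤ 1/(x-1) := by
    have := Real.log_le_sub_one_of_pos hb; linarith
  have e2 : Real.exp (Real.log (1 + 1/(x-1)) * θ) ≤ Real.exp (θ/(x-1)) := by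
    apply Real.exp_le_exp.mpr
    calc Real.log (1 + 1/(x-1)) * θ ≤ (1/(x-1)) * θ :=
          mul_le_mul_of_nonneg_right e1 h0.le
      _ = θ/(x-1) := by ring
  have e3 : Real.exp (θ/(x-1)) ≤ (1 - θ/(x-1))⁻¹ := by
    apply exp_le_inv_one_sub
    rw [div_lt_one hx1]; linarith
  have e4 : (1 - θ/(x-1))⁻¹ = (x-1)/(x-1-θ) := by
    rw [show 1 - θ/(x-1) = (x-1-θ)/(x-1) by field_simp]
    rw [inv_div]
  have e5 : (x-1)/(x-1-θ) ≤ 1 + δ/x := by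
    rw [div_le_iff₀ hx1θ]
    have h7 : δ*(1+θ)/(δ-θ) ≤ x := by linarith
    have hkey := (div_le_iff₀ hd).mp h7
    have h6 : (1+δ/x)*(x-1-θ) = (x+δ)*(x-1-θ)/x := by field_simp
    rw [h6, le_div_iff₀ hx0]
    nlinarith [hkey]
  calc (1 + 1/(x-1))^θ ≤ (1 - θ/(x-1))⁻¹ := by rw [e0]; exact e2.trans e3
    _ = (x-1)/(x-1-θ) := e4
    _ ≤ 1 + δ/x := e5

lemma mono_from_step {f : ℕ → ℝ} {M : ℕ} (h : ∀ j, M < j → f (j-1) ≤ f j) :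
    ∀ N, M ≤ N → f M ≤ f N := by
  intro N hN
  induction N, hN using Nat.le_induction with
  | base => exact le_refl _
  | succ n hn ih =>
      refine ih.trans ?_
      have := h (n+1) (by omega)
      simpa using this

lemma Wtel (W : ℕ → ℝ) (M : ℕ) (hM : 2 ≤ M) :
    ∀ N, M - 1 ≤ N → W N = W (M-1) + ∑ k ∈ Icc M N, dd W k := by
  intro N hN
  induction N, hN using Nat.le_induction with
  | base =>
      rw [Finset.Icc_eq_empty (by omega)]; simp
  | succ n hn ih =>
      rw [Finset.sum_Icc_succ_top (by omega), ← add_assoc, ← ih]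
      have : dd W (n+1) = W (n+1) - W n := by
        rw [dd, if_pos (by omega)]; congr 2
      rw [this]; ring

lemma Ssum {ε : ℝ} (hε0 : 0 < ε) (hε1 : ε ≤ 1) (M : ℕ) :
    ∀ N, M ≤ N →
      (((N:ℝ)+2)^ε - ((M:ℝ)+1)^ε)/ε ≤ ∑ k ∈ Icc M N, ((k:ℝ)+1)^(ε-1) := by
  intro N hN
  induction N, hN using Nat.le_induction with
  | base =>
      rw [Finset.Icc_self, Finset.sum_singleton]
      have := lemT1 hε0 hε1 (show (0:ℝ) < (M:ℝ)+1 by positivity)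
      rw [div_le_iff₀ hε0]
      have h2 : ((M:ℝ)+1+1) = (M:ℝ)+2 := by ring
      rw [h2] at this
      linarith
  | succ n hn ih =>
      rw [div_le_iff₀ hε0] at ih
      rw [Finset.sum_Icc_succ_top (by omega), div_le_iff₀ hε0]
      have key := lemT1 hε0 hε1 (show (0:ℝ) < (n:ℝ)+2 by positivity)
      have e1 : ((↑(n+1):ℝ)+2)^ε = (((n:ℝ)+2)+1)^ε := by push_cast; ring_nf
      have e2 : ((↑(n+1):ℝ)+1)^(ε-1) = ((n:ℝ)+2)^(ε-1) := by push_cast; ring_nf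
      rw [e1, e2]
      nlinarith [key]

lemma Ssum2 {q : ℝ} (h0 : 0 < q) {M : ℕ} (hM : 1 ≤ M) :
    ∀ N, M ≤ N → ∑ k ∈ Icc (M+1) N, (k:ℝ)^(-(1+q)) ≤ ((M:ℝ)^(-q) - (N:ℝ)^(-q))/q := by
  intro N hN
  induction N, hN using Nat.le_induction with
  | base =>
      rw [Finset.Icc_eq_empty (by omega)]
      simp
  | succ n hn ih =>
      rw [Finset.sum_Icc_succ_top (by omega)]
      have key := lemT2 h0 (show (2:ℝ) ≤ ((n:ℝ)+1) by
        have : (1:ℝ) ≤ (n:ℝ) := by exact_mod_cast hM.trans hn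
        linarith)
      have e1 : ((↑(n+1):ℝ)) = (n:ℝ)+1 := by push_cast; ring
      rw [e1]
      have e2 : ((n:ℝ)+1-1) = (n:ℝ) := by ring
      rw [e2] at key
      rw [le_div_iff₀ h0] at ih ⊢
      nlinarith [key]

lemma eventually_dd_pos (W : ℕ → ℝ) (N₀ : ℕ)
    (hmono : ∀ m n : ℕ, N₀ ≤ m → m ≤ n → W m ≤ W n)
    (htop : Tendsto W atTop atTop)
    {l : EReal}
    (hl : Tendsto (fun N : ℕ => (((N : ℝ) * dd (dd W) N / dd W N : ℝ) : EReal))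
      atTop (nhds l)) :
    ∀ᶠ N in atTop, 0 < dd W N := by
  have hge : ∀ N, N₀ + 2 ≤ N → 0 ≤ dd W N := by
    intro N hN
    rw [dd, if_pos (by omega)]
    have := hmono (N-1) N (by omega) (by omega)
    linarith
  by_contra hcon
  rw [Filter.not_eventually] at hcon
  have hfz : ∀ K : ℕ, ∃ N, K ≤ N ∧ N₀ + 2 ≤ N ∧ dd W N = 0 := by
    intro K
    obtain ⟨N, hN, hN2⟩ := (frequently_atTop.mp hcon) (max K (N₀+2))
    refine ⟨N, le_trans (le_max_left _ _) hN, le_trans (le_max_right _ _) hN, ?_⟩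
    exact le_antisymm (not_lt.mp hN2) (hge N (le_trans (le_max_right _ _) hN))
  -- l = 0
  have hl0 : l = ((0:ℝ):EReal) := by
    have hfreq : ∃ᶠ N : ℕ in atTop,
        ((((N : ℝ) * dd (dd W) N / dd W N : ℝ) : EReal)) ∈ ({((0:ℝ):EReal)} : Set EReal) := by
      rw [frequently_atTop]
      intro K
      obtain ⟨N, hKN, _, hz⟩ := hfz K
      exact ⟨N, hKN, by simp [hz]⟩
    have h2 := hl.frequently hfreq
    have h3 := mem_closure_iff_frequently.mpr h2
    simpa using h3
  -- 1 ≤ l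
  have hl1 : l ∈ Set.Ici (1 : EReal) := by
    have hfreq : ∃ᶠ N : ℕ in atTop,
        ((((N : ℝ) * dd (dd W) N / dd W N : ℝ) : EReal)) ∈ Set.Ici (1 : EReal) := by
      rw [frequently_atTop]
      intro K
      obtain ⟨N, hKN, hN0, hz⟩ := hfz K
      have hex : ∃ m, N < m ∧ dd W m ≠ 0 := by
        by_contra hex
        push_neg at hex
        have hconst : ∀ m, N ≤ m → W m = W N := by
          intro m hm
          induction m, hm using Nat.le_induction with
          | base => rfl
          | succ n hn ih =>
              have h1 : dd W (n+1) = W (n+1) - W n := by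
                rw [dd, if_pos (by omega)]; congr 2
              have h2 : dd W (n+1) = 0 := hex _ (by omega)
              rw [h1] at h2
              linarith [ih]
        obtain ⟨m, hm1, hm2⟩ := ((htop.eventually_ge_atTop (W N + 1)).and
          (eventually_ge_atTop N)).exists
        have := hconst m hm2
        linarith
      set M := Nat.find hex with hMdef
      obtain ⟨hNM, hMne⟩ := Nat.find_spec hex
      have hMprev : dd W (M-1) = 0 := by
        rcases Nat.lt_or_ge N (M-1) with h | h
        · have := Nat.find_min hex (show M - 1 < M by omega)
          push_neg at this
          exact this h
        · have : M - 1 = N := by omega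
          rw [this]; exact hz
      have hM2 : 2 ≤ M := by omega
      have hMpos : 0 < dd W M := lt_of_le_of_ne (hge M (by omega)) (Ne.symm hMne)
      have hdd : dd (dd W) M = dd W M := by
        rw [dd, if_pos hM2, hMprev]; ring
      refine ⟨M, by omega, ?_⟩
      have hval : (M : ℝ) * dd (dd W) M / dd W M = (M : ℝ) := by
        rw [hdd, mul_div_assoc, div_self hMpos.ne', mul_one]
      rw [hval]
      simp only [Set.mem_Ici]
      rw [show (1 : EReal) = ((1:ℝ):EReal) by norm_cast, EReal.coe_le_coe_iff]
      have : (1:ℕ) ≤ M := by omega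
      exact_mod_cast this
    have h2 := hl.frequently hfreq
    have h3 := mem_closure_iff_frequently.mpr h2
    rwa [isClosed_Ici.closure_eq] at h3
  rw [hl0] at hl1
  simp only [Set.mem_Ici] at hl1
  have h01 : (0:EReal) < 1 := by
    rw [show (0:EReal) = ((0:ℝ):EReal) by norm_cast,
      show (1:EReal) = ((1:ℝ):EReal) by norm_cast, EReal.coe_lt_coe_iff]
    norm_num
  rw [show ((0:ℝ):EReal) = (0:EReal) by norm_cast] at hl1
  exact absurd hl1 (not_le.mpr h01)

lemma caseA (W : ℕ → ℝ) (hnn : ∀ n, 0 ≤ W n)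
    (hpos : ∀ᶠ N in atTop, 0 < dd W N)
    {c : ℝ} (hc1 : -1 < c) (hc0 : c < 0)
    (hc : ∀ᶠ j : ℕ in atTop, c ≤ (j:ℝ) * dd (dd W) j / dd W j)
    (hlog : Tendsto (fun N : ℕ => Real.log (W N) / Real.log N) atTop (nhds 0)) :
    False := by
  set δ : ℝ := -c with hδdef
  have hδ0 : 0 < δ := by simp [hδdef]; linarith
  have hδ1 : δ < 1 := by simp [hδdef]; linarith
  set ε : ℝ := 1 - δ with hεdef
  have hε0 : 0 < ε := by simp [hεdef]; linarith
  have hε1 : ε ≤ 1 := by simp [hεdef]; linarith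
  obtain ⟨M, hM⟩ := eventually_atTop.mp ((hpos.and hc).and (eventually_ge_atTop 2))
  have hM2 : 2 ≤ M := (hM M le_rfl).2
  have hMfacts : ∀ j, M ≤ j → 0 < dd W j ∧ c ≤ (j:ℝ) * dd (dd W) j / dd W j ∧ 2 ≤ j :=
    fun j hj => ⟨(hM j hj).1.1, (hM j hj).1.2, (hM j hj).2⟩
  -- step inequality
  have hstep : ∀ j, M < j →
      dd W (j-1) * ((↑(j-1):ℝ))^δ ≤ dd W j * (j:ℝ)^δ := by
    intro j hj
    obtain ⟨haj, hrj, hj2⟩ := hMfacts j hj.le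
    obtain ⟨haj1, -, -⟩ := hMfacts (j-1) (by omega)
    have hj3 : 3 ≤ j := by omega
    have hcast : ((↑(j-1):ℝ)) = (j:ℝ) - 1 := by
      have := Nat.cast_sub (show 1 ≤ j by omega) (R := ℝ)
      simpa using this
    have hjR : (2:ℝ) ≤ (j:ℝ) := by exact_mod_cast hj2
    have hjpos : (0:ℝ) < j := by linarith
    -- from c ≤ r j : dd W (j-1) ≤ dd W j * (1 + δ/j)
    have hdd2 : dd (dd W) j = dd W j - dd W (j-1) := by
      rw [dd, if_pos hj2]
    rw [hdd2] at hrj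
    have h1 : c * dd W j ≤ (j:ℝ) * (dd W j - dd W (j-1)) := (le_div_iff₀ haj).mp hrj
    have hcδ : c = -δ := by rw [hδdef]; ring
    have h2 : dd W (j-1) ≤ dd W j * (1 + δ/(j:ℝ)) := by
      rw [show dd W j * (1 + δ/(j:ℝ)) = dd W j * ((j:ℝ)+δ)/(j:ℝ) by field_simp,
        le_div_iff₀ hjpos]
      nlinarith [h1, hcδ]
    have h3 : 1 + δ/(j:ℝ) ≤ ((j:ℝ)/((j:ℝ)-1))^δ := lemA hδ0.le hjR
    have h4 : dd W (j-1) ≤ dd W j * ((j:ℝ)/((j:ℝ)-1))^δ := by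
      calc dd W (j-1) ≤ dd W j * (1 + δ/(j:ℝ)) := h2
        _ ≤ dd W j * ((j:ℝ)/((j:ℝ)-1))^δ :=
            mul_le_mul_of_nonneg_left h3 haj.le
    have hj1R : (0:ℝ) < (j:ℝ) - 1 := by linarith
    have h5 : ((j:ℝ)/((j:ℝ)-1))^δ * ((j:ℝ)-1)^δ = (j:ℝ)^δ := by
      rw [← Real.mul_rpow (by positivity) hj1R.le]
      congr 1
      field_simp
    rw [hcast]
    calc dd W (j-1) * ((j:ℝ)-1)^δ
        ≤ (dd W j * ((j:ℝ)/((j:ℝ)-1))^δ) * ((j:ℝ)-1)^δ :=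
          mul_le_mul_of_nonneg_right h4 (Real.rpow_nonneg hj1R.le δ)
      _ = dd W j * (((j:ℝ)/((j:ℝ)-1))^δ * ((j:ℝ)-1)^δ) := by ring
      _ = dd W j * (j:ℝ)^δ := by rw [h5]
  have hmono2 := mono_from_step (f := fun j => dd W j * (j:ℝ)^δ) hstep
  set C : ℝ := dd W M * (M:ℝ)^δ with hCdef
  have hC0 : 0 < C := by
    apply mul_pos (hMfacts M le_rfl).1
    apply Real.rpow_pos_of_pos
    have : (0:ℕ) < M := by omega
    exact_mod_cast this
  -- lower bound on dd W k
  have hak : ∀ k, M ≤ k → C * (((k:ℝ)+1))^(ε-1) ≤ dd W k := by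
    intro k hk
    have h1 := hmono2 k hk
    have hkR : (0:ℝ) < (k:ℝ) := by
      have : (0:ℕ) < k := by omega
      exact_mod_cast this
    have hδε : ε - 1 = -δ := by rw [hεdef]; ring
    have h2 : (((k:ℝ)+1))^(ε-1) ≤ (k:ℝ)^(ε-1) :=
      Real.rpow_le_rpow_of_nonpos hkR (by linarith) (by rw [hδε]; linarith)
    have h3 : C * (k:ℝ)^(ε-1) ≤ dd W k := by
      rw [hδε, Real.rpow_neg hkR.le, ← div_eq_mul_inv, div_le_iff₀ (by positivity)]
      calc C ≤ dd W k * (k:ℝ)^δ := h1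
        _ = dd W k * (k:ℝ)^δ := rfl
    calc C * (((k:ℝ)+1))^(ε-1) ≤ C * (k:ℝ)^(ε-1) :=
          mul_le_mul_of_nonneg_left h2 hC0.le
      _ ≤ dd W k := h3
  -- lower bound on W N
  have hWlow : ∀ N, M+1 ≤ N → C * ((((N:ℝ)+2))^ε - (((M:ℝ)+2))^ε)/ε ≤ W N := by
    intro N hN
    have htel := Wtel W (M+1) (by omega) N (by omega)
    have hsum1 : ∑ k ∈ Icc (M+1) N, C * (((k:ℝ)+1))^(ε-1) ≤ ∑ k ∈ Icc (M+1) N, dd W k := by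
      apply Finset.sum_le_sum
      intro k hk
      have hk' := (Finset.mem_Icc.mp hk).1
      exact hak k (by omega)
    have hsum2 : C * ((((N:ℝ)+2))^ε - (((M:ℝ)+2))^ε)/ε
        ≤ ∑ k ∈ Icc (M+1) N, C * (((k:ℝ)+1))^(ε-1) := by
      rw [← Finset.mul_sum, mul_div_assoc]
      apply mul_le_mul_of_nonneg_left _ hC0.le
      have := Ssum hε0 hε1 (M+1) N (by omega)
      have e1 : ((↑(M+1):ℝ)+1) = (M:ℝ)+2 := by push_cast; ring
      rw [e1] at this
      exact this
    have hWM1 : 0 ≤ W M := hnn M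
    calc C * ((((N:ℝ)+2))^ε - (((M:ℝ)+2))^ε)/ε
        ≤ ∑ k ∈ Icc (M+1) N, C * (((k:ℝ)+1))^(ε-1) := hsum2
      _ ≤ ∑ k ∈ Icc (M+1) N, dd W k := hsum1
      _ ≤ W M + ∑ k ∈ Icc (M+1) N, dd W k := by linarith
      _ = W N := by rw [htel]; simp
  -- final log contradiction
  have hlogtop : Tendsto (fun N : ℕ => Real.log N) atTop atTop :=
    Real.tendsto_log_atTop.comp tendsto_natCast_atTop_atTop
  have hNε : Tendsto (fun N : ℕ => ((N:ℝ))^ε) atTop atTop :=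
    (tendsto_rpow_atTop hε0).comp tendsto_natCast_atTop_atTop
  set K : ℝ := C/(2*ε) with hKdef
  have hK0 : 0 < K := by positivity
  have hev1 : ∀ᶠ N : ℕ in atTop, K * (N:ℝ)^ε ≤ W N := by
    filter_upwards [hNε.eventually_ge_atTop (2*(((M:ℝ)+2))^ε), eventually_ge_atTop (M+1)]
      with N h1 h2
    have hN2 : ((N:ℝ))^ε ≤ (((N:ℝ)+2))^ε :=
      Real.rpow_le_rpow (by positivity) (by linarith) hε0.le
    have hX : (N:ℝ)^ε/2 ≤ (((N:ℝ)+2))^ε - (((M:ℝ)+2))^ε := by linarith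
    calc K * (N:ℝ)^ε = C * ((N:ℝ)^ε/2)/ε := by
          rw [hKdef]; field_simp
      _ ≤ C * ((((N:ℝ)+2))^ε - (((M:ℝ)+2))^ε)/ε :=
          (div_le_div_iff_of_pos_right hε0).mpr (mul_le_mul_of_nonneg_left hX hC0.le)
      _ ≤ W N := hWlow N h2
  have hev2 : ∀ᶠ N : ℕ in atTop, ε + Real.log K / Real.log N ≤ Real.log (W N) / Real.log N := by
    filter_upwards [hev1, eventually_ge_atTop 2] with N h1 h2
    have hN1 : (1:ℝ) < (N:ℝ) := by exact_mod_cast (by omega : 1 < N)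
    have hlogN : 0 < Real.log N := Real.log_pos hN1
    have hNpos : (0:ℝ) < (N:ℝ) := by linarith
    have hKN : 0 < K * (N:ℝ)^ε := by positivity
    have h3 : Real.log (K * (N:ℝ)^ε) ≤ Real.log (W N) := Real.log_le_log hKN h1
    rw [Real.log_mul hK0.ne' (Real.rpow_pos_of_pos hNpos ε).ne', Real.log_rpow hNpos] at h3
    have h4 : ε + Real.log K / Real.log N = (Real.log K + ε * Real.log N)/Real.log N := by
      field_simp; ring
    rw [h4]
    exact (div_le_div_iff_of_pos_right hlogN).mpr h3
  have hlim : Tendsto (fun N : ℕ => ε + Real.log K / Real.log N) atTop (nhds (ε + 0)) :=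
    tendsto_const_nhds.add (Tendsto.div_atTop tendsto_const_nhds hlogtop)
  have hfin := le_of_tendsto_of_tendsto hlim hlog hev2
  linarith

lemma caseB (W : ℕ → ℝ) (hpos : ∀ᶠ N in atTop, 0 < dd W N)
    (htop : Tendsto W atTop atTop)
    {c : ℝ} (hc : c < -1)
    (hcl : ∀ᶠ j : ℕ in atTop, (j:ℝ) * dd (dd W) j / dd W j ≤ c) : False := by
  set δ : ℝ := -c with hδdef
  have hδ1 : 1 < δ := by simp [hδdef]; linarith
  set q : ℝ := min ((δ-1)/2) (1/2) with hqdef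
  have hq0 : 0 < q := by
    apply lt_min_iff.mpr; constructor <;> linarith
  have hq1 : q ≤ 1/2 := min_le_right _ _
  set θ : ℝ := 1 + q with hθdef
  have hθ0 : 0 < θ := by simp [hθdef]; linarith
  have hθδ : θ < δ := by
    have h1 : q ≤ (δ-1)/2 := min_le_left _ _
    simp only [hθdef]; linarith
  have hg : ∀ᶠ j : ℕ in atTop, (δ*(1+θ))/(δ-θ) + θ + 2 ≤ (j:ℝ) :=
    tendsto_natCast_atTop_atTop.eventually_ge_atTop _
  obtain ⟨M, hM⟩ := eventually_atTop.mp (((hpos.and hcl).and (eventually_ge_atTop 2)).and hg)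
  have hM2 : 2 ≤ M := (hM M le_rfl).1.2
  have hMfacts : ∀ j, M ≤ j → 0 < dd W j ∧ (j:ℝ) * dd (dd W) j / dd W j ≤ c
      ∧ 2 ≤ j ∧ (δ*(1+θ))/(δ-θ) + θ + 2 ≤ (j:ℝ) :=
    fun j hj => ⟨(hM j hj).1.1.1, (hM j hj).1.1.2, (hM j hj).1.2, (hM j hj).2⟩
  have hstep : ∀ j, M < j →
      -(dd W (j-1) * ((↑(j-1):ℝ))^θ) ≤ -(dd W j * (j:ℝ)^θ) := by
    intro j hj
    obtain ⟨haj, hrj, hj2, hjB⟩ := hMfacts j hj.le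
    obtain ⟨haj1, -, -, -⟩ := hMfacts (j-1) (by omega)
    have hj3 : 3 ≤ j := by omega
    have hcast : ((↑(j-1):ℝ)) = (j:ℝ) - 1 := by
      have := Nat.cast_sub (show 1 ≤ j by omega) (R := ℝ)
      simpa using this
    have hjR : (2:ℝ) ≤ (j:ℝ) := by exact_mod_cast hj2
    have hjpos : (0:ℝ) < j := by linarith
    have hj1R : (0:ℝ) < (j:ℝ) - 1 := by linarith
    have hdd2 : dd (dd W) j = dd W j - dd W (j-1) := by
      rw [dd, if_pos hj2]
    rw [hdd2] at hrj
    have h1 : (j:ℝ) * (dd W j - dd W (j-1)) ≤ c * dd W j := (div_le_iff₀ haj).mp hrj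
    have hcδ : c = -δ := by rw [hδdef]; ring
    have h2 : dd W j * (1 + δ/(j:ℝ)) ≤ dd W (j-1) := by
      rw [show dd W j * (1 + δ/(j:ℝ)) = dd W j * ((j:ℝ)+δ)/(j:ℝ) by field_simp,
        div_le_iff₀ hjpos]
      nlinarith [h1, hcδ]
    have h3 : (1 + 1/((j:ℝ)-1))^θ ≤ 1 + δ/(j:ℝ) := lemB hθ0 hθδ hjB
    have h4 : dd W j * (1 + 1/((j:ℝ)-1))^θ ≤ dd W (j-1) :=
      le_trans (mul_le_mul_of_nonneg_left h3 haj.le) h2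
    have h5 : (1 + 1/((j:ℝ)-1))^θ * ((j:ℝ)-1)^θ = (j:ℝ)^θ := by
      rw [← Real.mul_rpow (by positivity) hj1R.le]
      congr 1
      field_simp; ring
    rw [hcast, neg_le_neg_iff]
    calc dd W j * (j:ℝ)^θ = dd W j * ((1 + 1/((j:ℝ)-1))^θ * ((j:ℝ)-1)^θ) := by rw [h5]
      _ = (dd W j * (1 + 1/((j:ℝ)-1))^θ) * ((j:ℝ)-1)^θ := by ring
      _ ≤ dd W (j-1) * ((j:ℝ)-1)^θ :=
          mul_le_mul_of_nonneg_right h4 (Real.rpow_nonneg hj1R.le θ)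
  have hmono2 := mono_from_step (f := fun j => -(dd W j * (j:ℝ)^θ)) hstep
  set C : ℝ := dd W M * (M:ℝ)^θ with hCdef
  have hMR : (0:ℝ) < (M:ℝ) := by
    have : (0:ℕ) < M := by omega
    exact_mod_cast this
  have hC0 : 0 < C := mul_pos (hMfacts M le_rfl).1 (Real.rpow_pos_of_pos hMR θ)
  have hak : ∀ k, M ≤ k → dd W k ≤ C * (k:ℝ)^(-(1+q)) := by
    intro k hk
    have h1 := hmono2 k hk
    simp only [neg_le_neg_iff] at h1
    have hkR : (0:ℝ) < (k:ℝ) := by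
      have : (0:ℕ) < k := by omega
      exact_mod_cast this
    have hθq : -(1+q) = -θ := by rw [hθdef]
    rw [hθq, Real.rpow_neg hkR.le, ← div_eq_mul_inv, le_div_iff₀ (Real.rpow_pos_of_pos hkR θ)]
    exact h1
  have hWbnd : ∀ N, M ≤ N → W N ≤ W M + C * ((M:ℝ)^(-q))/q := by
    intro N hN
    have htel := Wtel W (M+1) (by omega) N (by omega)
    have h0 : W N = W M + ∑ k ∈ Icc (M+1) N, dd W k := by rw [htel]; simp
    have hsum1 : ∑ k ∈ Icc (M+1) N, dd W k ≤ ∑ k ∈ Icc (M+1) N, C * (k:ℝ)^(-(1+q)) := by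
      apply Finset.sum_le_sum
      intro k hk
      have hk' := (Finset.mem_Icc.mp hk).1
      exact hak k (by omega)
    have hsum2 : ∑ k ∈ Icc (M+1) N, C * (k:ℝ)^(-(1+q)) ≤ C * ((M:ℝ)^(-q))/q := by
      rw [← Finset.mul_sum, mul_div_assoc]
      apply mul_le_mul_of_nonneg_left _ hC0.le
      have h2 := Ssum2 hq0 (show 1 ≤ M by omega) N hN
      have h3 : ((M:ℝ)^(-q) - (N:ℝ)^(-q))/q ≤ ((M:ℝ)^(-q))/q := by
        apply (div_le_div_iff_of_pos_right hq0).mpr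
        have hNR : (0:ℝ) < (N:ℝ) := by
          have : (0:ℕ) < N := by omega
          exact_mod_cast this
        have := Real.rpow_pos_of_pos hNR (-q)
        linarith
      exact h2.trans h3
    linarith
  obtain ⟨N, hN1, hN2⟩ := ((htop.eventually_ge_atTop (W M + C * ((M:ℝ)^(-q))/q + 1)).and
    (eventually_ge_atTop M)).exists
  have := hWbnd N hN2
  linarith

lemma part3 (W : ℕ → ℝ) (hnn : ∀ n, 0 ≤ W n)
    (hpos : ∀ᶠ N in atTop, 0 < dd W N)
    (htop : Tendsto W atTop atTop)
    (hr : Tendsto (fun N : ℕ => (N:ℝ) * dd (dd W) N / dd W N) atTop (nhds (-1))) :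
    Tendsto (fun N : ℕ => (N : ℝ) * dd W N / W N) atTop (nhds 0) := by
  rw [NormedAddCommGroup.tendsto_nhds_zero]
  intro ε₀ hε₀
  set ε : ℝ := min (ε₀/3) (1/2) with hεdef
  have hε0 : 0 < ε := by
    apply lt_min_iff.mpr; constructor <;> linarith
  have hε12 : ε ≤ 1/2 := min_le_right _ _
  have h2ε : 2*ε < ε₀ := by
    have := min_le_left (ε₀/3) (1/2); linarith
  set δ : ℝ := 1 - ε with hδdef
  have hδ0 : 0 < δ := by simp only [hδdef]; linarith
  have hδ1 : δ ≤ 1 := by simp only [hδdef]; linarith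
  have hευ : ε + δ = 1 := by simp only [hδdef]; ring
  have hrev : ∀ᶠ j : ℕ in atTop, (j:ℝ) * dd (dd W) j / dd W j ≤ -δ := by
    apply hr.eventually_le_const
    simp only [hδdef]; linarith
  obtain ⟨M, hM⟩ := eventually_atTop.mp ((hpos.and hrev).and (eventually_ge_atTop 2))
  have hM2 : 2 ≤ M := (hM M le_rfl).2
  have hMfacts : ∀ j, M ≤ j → 0 < dd W j ∧ (j:ℝ) * dd (dd W) j / dd W j ≤ -δ ∧ 2 ≤ j :=
    fun j hj => ⟨(hM j hj).1.1, (hM j hj).1.2, (hM j hj).2⟩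
  have hstep : ∀ j, M < j →
      -(dd W (j-1) * ((↑(j-1):ℝ)+1)^δ) ≤ -(dd W j * ((j:ℝ)+1)^δ) := by
    intro j hj
    obtain ⟨haj, hrj, hj2⟩ := hMfacts j hj.le
    have hcast : ((↑(j-1):ℝ)) = (j:ℝ) - 1 := by
      have := Nat.cast_sub (show 1 ≤ j by omega) (R := ℝ)
      simpa using this
    have hjR : (2:ℝ) ≤ (j:ℝ) := by exact_mod_cast hj2
    have hjpos : (0:ℝ) < j := by linarith
    have hdd2 : dd (dd W) j = dd W j - dd W (j-1) := by
      rw [dd, if_pos hj2]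
    rw [hdd2] at hrj
    have h1 : (j:ℝ) * (dd W j - dd W (j-1)) ≤ (-δ) * dd W j := (div_le_iff₀ haj).mp hrj
    have h2 : dd W j * (1 + δ/(j:ℝ)) ≤ dd W (j-1) := by
      rw [show dd W j * (1 + δ/(j:ℝ)) = dd W j * ((j:ℝ)+δ)/(j:ℝ) by field_simp,
        div_le_iff₀ hjpos]
      nlinarith [h1]
    have h3 : (1 + 1/(j:ℝ))^δ ≤ 1 + δ/(j:ℝ) := by
      have := bern01 hδ0.le hδ1 (show (0:ℝ) ≤ 1/(j:ℝ) by positivity)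
      calc (1 + 1/(j:ℝ))^δ ≤ 1 + δ * (1/(j:ℝ)) := this
        _ = 1 + δ/(j:ℝ) := by ring
    have h4 : dd W j * (1 + 1/(j:ℝ))^δ ≤ dd W (j-1) :=
      le_trans (mul_le_mul_of_nonneg_left h3 haj.le) h2
    have h5 : (1 + 1/(j:ℝ))^δ * ((j:ℝ))^δ = ((j:ℝ)+1)^δ := by
      rw [← Real.mul_rpow (by positivity) hjpos.le]
      congr 1
      field_simp
    rw [hcast, neg_le_neg_iff, show (j:ℝ) - 1 + 1 = (j:ℝ) by ring]
    calc dd W j * ((j:ℝ)+1)^δ = dd W j * ((1 + 1/(j:ℝ))^δ * ((j:ℝ))^δ) := by rw [h5]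
      _ = (dd W j * (1 + 1/(j:ℝ))^δ) * ((j:ℝ))^δ := by ring
      _ ≤ dd W (j-1) * ((j:ℝ))^δ :=
          mul_le_mul_of_nonneg_right h4 (Real.rpow_nonneg hjpos.le δ)
  have hpair : ∀ k N, M ≤ k → k ≤ N →
      dd W N * ((N:ℝ)+1)^δ ≤ dd W k * ((k:ℝ)+1)^δ := by
    intro k N hk hkN
    have := mono_from_step (f := fun j => -(dd W j * ((j:ℝ)+1)^δ)) (M := k)
      (fun j hj => hstep j (lt_of_le_of_lt hk hj)) N hkN
    simp only [neg_le_neg_iff] at this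
    exact this
  have hWlow : ∀ N, M ≤ N →
      (dd W N * ((N:ℝ)+1)^δ) * ((((N:ℝ)+2))^ε - (((M:ℝ)+1))^ε)/ε ≤ W N := by
    intro N hN
    have htel := Wtel W M hM2 N (by omega)
    have hterm : ∀ k, M ≤ k → k ≤ N →
        (dd W N * ((N:ℝ)+1)^δ) * ((k:ℝ)+1)^(ε-1) ≤ dd W k := by
      intro k hk hkN
      have h1 := hpair k N hk hkN
      have hk1 : (0:ℝ) < (k:ℝ)+1 := by positivity
      have hδε : ε - 1 = -δ := by simp only [hδdef]; ring
      rw [hδε, Real.rpow_neg hk1.le, mul_comm (dd W N * ((N:ℝ)+1)^δ), ← div_eq_inv_mul,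
        div_le_iff₀ (Real.rpow_pos_of_pos hk1 δ)]
      linarith [h1]
    have hsum1 : ∑ k ∈ Icc M N, (dd W N * ((N:ℝ)+1)^δ) * ((k:ℝ)+1)^(ε-1)
        ≤ ∑ k ∈ Icc M N, dd W k := by
      apply Finset.sum_le_sum
      intro k hk
      obtain ⟨h1, h2⟩ := Finset.mem_Icc.mp hk
      exact hterm k h1 h2
    have haN : 0 < dd W N := (hMfacts N hN).1
    have hcoef : (0:ℝ) ≤ dd W N * ((N:ℝ)+1)^δ := by positivity
    have hsum2 : (dd W N * ((N:ℝ)+1)^δ) * ((((N:ℝ)+2))^ε - (((M:ℝ)+1))^ε)/ε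
        ≤ ∑ k ∈ Icc M N, (dd W N * ((N:ℝ)+1)^δ) * ((k:ℝ)+1)^(ε-1) := by
      rw [← Finset.mul_sum, mul_div_assoc]
      exact mul_le_mul_of_nonneg_left (Ssum hε0 (by linarith) M N hN) hcoef
    have hWM1 : 0 ≤ W (M-1) := hnn _
    calc (dd W N * ((N:ℝ)+1)^δ) * ((((N:ℝ)+2))^ε - (((M:ℝ)+1))^ε)/ε
        ≤ ∑ k ∈ Icc M N, (dd W N * ((N:ℝ)+1)^δ) * ((k:ℝ)+1)^(ε-1) := hsum2
      _ ≤ ∑ k ∈ Icc M N, dd W k := hsum1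
      _ ≤ W (M-1) + ∑ k ∈ Icc M N, dd W k := by linarith
      _ = W N := htel.symm
  set D : ℝ := (((M:ℝ)+1))^ε with hDdef
  have hD0 : 0 < D := Real.rpow_pos_of_pos (by positivity) ε
  have hN1ε : Tendsto (fun N : ℕ => ((N:ℝ)+1)^ε) atTop atTop :=
    (tendsto_rpow_atTop hε0).comp
      (tendsto_atTop_add_const_right _ 1 tendsto_natCast_atTop_atTop)
  filter_upwards [hN1ε.eventually_ge_atTop (4*D), eventually_ge_atTop M,
    htop.eventually_ge_atTop 1, eventually_ge_atTop 1] with N h4D hNM hW1 hN1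
  have haN : 0 < dd W N := (hMfacts N hNM).1
  have hNpos : (0:ℝ) < (N:ℝ)+1 := by positivity
  have hWN0 : (0:ℝ) < W N := by linarith
  -- (N+1)^δ * (N+1)^ε = N+1
  have hsplit : ((N:ℝ)+1)^δ * ((N:ℝ)+1)^ε = (N:ℝ)+1 := by
    rw [← Real.rpow_add hNpos]
    rw [show δ + ε = 1 by linarith [hευ]]
    exact Real.rpow_one _
  have hεN0 : (0:ℝ) < ((N:ℝ)+1)^ε := Real.rpow_pos_of_pos hNpos ε
  have hδN0 : (0:ℝ) < ((N:ℝ)+1)^δ := Real.rpow_pos_of_pos hNpos δ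
  have hδform : ((N:ℝ)+1)^δ = ((N:ℝ)+1)/((N:ℝ)+1)^ε := by
    field_simp
    linarith [hsplit]
  have hDB : D * ((N:ℝ)+1)^δ ≤ ((N:ℝ)+1)/4 := by
    rw [hδform]
    rw [show D * (((N:ℝ)+1)/((N:ℝ)+1)^ε) = (D*((N:ℝ)+1))/((N:ℝ)+1)^ε by ring]
    calc (D*((N:ℝ)+1))/((N:ℝ)+1)^ε ≤ (D*((N:ℝ)+1))/(4*D) :=
          div_le_div_of_nonneg_left (by positivity) (by positivity) h4D
      _ = ((N:ℝ)+1)/4 := by field_simp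
  have hN2ε : ((N:ℝ)+1)^ε ≤ ((N:ℝ)+2)^ε :=
    Real.rpow_le_rpow (by positivity) (by linarith) hε0.le
  have hmain : ((N:ℝ)+1)^δ * ((((N:ℝ)+2))^ε - D) ≥ ((N:ℝ))/2 := by
    have h1 : ((N:ℝ)+1)^δ * ((((N:ℝ)+2))^ε - D)
        ≥ ((N:ℝ)+1)^δ * ((((N:ℝ)+1))^ε - D) := by
      apply mul_le_mul_of_nonneg_left _ hδN0.le
      linarith
    have h2 : ((N:ℝ)+1)^δ * ((((N:ℝ)+1))^ε - D) = ((N:ℝ)+1) - ((N:ℝ)+1)^δ * D := by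
      rw [mul_sub, hsplit]
    have h3 : ((N:ℝ)+1) - ((N:ℝ)+1)^δ * D ≥ (3/4)*((N:ℝ)+1) := by
      have := hDB; linarith [hDB]
    have hNR : (1:ℝ) ≤ (N:ℝ) := by exact_mod_cast hN1
    linarith
  have hfinal : (N:ℝ) * dd W N ≤ 2*ε*(W N) := by
    have h1 := hWlow N hNM
    have h2 : (dd W N * ((N:ℝ)+1)^δ) * ((((N:ℝ)+2))^ε - D)/ε
        ≥ dd W N * ((N:ℝ)/2)/ε := by
      apply (div_le_div_iff_of_pos_right hε0).mpr
      rw [show (dd W N * ((N:ℝ)+1)^δ) * ((((N:ℝ)+2))^ε - D)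
        = dd W N * (((N:ℝ)+1)^δ * ((((N:ℝ)+2))^ε - D)) by ring]
      exact mul_le_mul_of_nonneg_left hmain haN.le
    have h3 : dd W N * ((N:ℝ)/2)/ε ≤ W N := by
      calc dd W N * ((N:ℝ)/2)/ε ≤ (dd W N * ((N:ℝ)+1)^δ) * ((((N:ℝ)+2))^ε - D)/ε := h2
        _ ≤ W N := h1
    rw [div_le_iff₀ hε0] at h3
    nlinarith [h3]
  have hval : 0 ≤ (N:ℝ) * dd W N / W N := by positivity
  rw [Real.norm_eq_abs, abs_of_nonneg hval, div_lt_iff₀ hWN0]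
  calc (N:ℝ) * dd W N ≤ 2*ε*(W N) := hfinal
    _ < ε₀ * W N := by nlinarith [hWN0]

lemma part2 (W : ℕ → ℝ) (hpos : ∀ᶠ N in atTop, 0 < dd W N)
    (hr : Tendsto (fun N : ℕ => (N:ℝ) * dd (dd W) N / dd W N) atTop (nhds (-1))) :
    Tendsto (fun N : ℕ => (N:ℝ) * dd (dd W) (N+1) / dd W N) atTop (nhds (-1)) := by
  have hpos1 : ∀ᶠ N : ℕ in atTop, 0 < dd W (N+1) := (tendsto_add_atTop_nat 1).eventually hpos
  set s : ℕ → ℝ := fun N => ((N:ℝ)+1) * dd (dd W) (N+1) / dd W (N+1) with hsdef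
  have hs : Tendsto s atTop (nhds (-1)) := by
    have h1 := hr.comp (tendsto_add_atTop_nat 1)
    apply h1.congr
    intro N
    simp only [Function.comp_apply, hsdef]
    push_cast
    ring_nf
  have hatTop : Tendsto (fun N : ℕ => (N:ℝ)+1) atTop atTop :=
    tendsto_atTop_add_const_right _ 1 tendsto_natCast_atTop_atTop
  have h2 : Tendsto (fun N : ℕ => s N / ((N:ℝ)+1)) atTop (nhds 0) := hs.div_atTop hatTop
  set q : ℕ → ℝ := fun N => dd W N / dd W (N+1) with hqdef
  have hq : Tendsto q atTop (nhds 1) := by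
    have h3 : Tendsto (fun N : ℕ => 1 - s N / ((N:ℝ)+1)) atTop (nhds (1 - 0)) :=
      tendsto_const_nhds.sub h2
    rw [sub_zero] at h3
    apply h3.congr'
    filter_upwards [hpos1, eventually_ge_atTop 1] with N ha1 hN1
    have hdd2 : dd (dd W) (N+1) = dd W (N+1) - dd W N := by
      rw [dd, if_pos (by omega)]
      norm_num
    simp only [hsdef, hqdef, hdd2]
    have hN0 : ((N:ℝ)+1) ≠ 0 := by positivity
    field_simp
    ring
  have hfrac : Tendsto (fun N : ℕ => (N:ℝ)/((N:ℝ)+1)) atTop (nhds 1) := by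
    have := tendsto_natCast_div_add_atTop (𝕜 := ℝ) 1
    simpa using this
  have hall : Tendsto (fun N : ℕ => ((N:ℝ)/((N:ℝ)+1)) * s N / q N) atTop
      (nhds (1 * (-1) / 1)) := (hfrac.mul hs).div hq (by norm_num)
  norm_num at hall
  apply hall.congr'
  filter_upwards [hpos, hpos1, eventually_ge_atTop 1] with N ha0 ha1 hN1
  have hdd2 : dd (dd W) (N+1) = dd W (N+1) - dd W N := by
    rw [dd, if_pos (by omega)]
    norm_num
  simp only [hsdef, hqdef, hdd2]
  have hN0 : ((N:ℝ)+1) ≠ 0 := by positivity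
  field_simp

/-- claims (1)-(3) in the proof of Boshernitzan's lemma. -/
theorem stmt10 (W : ℕ → ℝ) (hW : memWstar W)
    (hlog : Tendsto (fun N : ℕ => Real.log (W N) / Real.log N) atTop (nhds 0)) :
    Tendsto (fun N : ℕ => W (N - 1) / W N) atTop (nhds 1) ∧
    Tendsto (fun N : ℕ => (N : ℝ) * dd (dd W) (N + 1) / dd W N) atTop (nhds (-1)) ∧
    Tendsto (fun N : ℕ => (N : ℝ) * dd W N / W N) atTop (nhds 0) := by
  obtain ⟨⟨hnn, ⟨N₀, hmono⟩, htop⟩, l, hl⟩ := hW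
  have hpos : ∀ᶠ N in atTop, 0 < dd W N := eventually_dd_pos W N₀ hmono htop hl
  have hlm1 : l = ((-1:ℝ):EReal) := by
    rcases lt_trichotomy l ((-1:ℝ):EReal) with h | h | h
    · exfalso
      obtain ⟨c, hc1, hc2⟩ := EReal.exists_between_coe_real h
      have hcR : c < -1 := EReal.coe_lt_coe_iff.mp hc2
      have hev : ∀ᶠ j : ℕ in atTop, (j:ℝ) * dd (dd W) j / dd W j ≤ c := by
        filter_upwards [hl.eventually_lt_const hc1] with j hj
        exact (EReal.coe_lt_coe_iff.mp hj).le
      exact caseB W hpos htop hcR hev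
    · exact h
    · exfalso
      have h0 : ((-1:ℝ):EReal) < ((0:ℝ):EReal) := EReal.coe_lt_coe_iff.mpr (by norm_num)
      have hm : ((-1:ℝ):EReal) < min l ((0:ℝ):EReal) := lt_min h h0
      obtain ⟨c, hc1, hc2⟩ := EReal.exists_between_coe_real hm
      have hc1R : -1 < c := EReal.coe_lt_coe_iff.mp hc1
      have hc0R : c < 0 := EReal.coe_lt_coe_iff.mp (hc2.trans_le (min_le_right _ _))
      have hcl : ((c:ℝ):EReal) < l := hc2.trans_le (min_le_left _ _)
      have hev : ∀ᶠ j : ℕ in atTop, c ≤ (j:ℝ) * dd (dd W) j / dd W j := by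
        filter_upwards [hl.eventually_const_lt hcl] with j hj
        exact (EReal.coe_lt_coe_iff.mp hj).le
      exact caseA W hnn hpos hc1R hc0R hev hlog
  have hrR : Tendsto (fun N : ℕ => (N:ℝ) * dd (dd W) N / dd W N) atTop (nhds (-1)) := by
    rw [hlm1] at hl
    exact EReal.tendsto_coe.mp hl
  have h3 := part3 W hnn hpos htop hrR
  have h2 := part2 W hpos hrR
  refine ⟨?_, h2, h3⟩
  have h4 : Tendsto (fun N : ℕ => ((N:ℝ) * dd W N / W N) * (1/(N:ℝ))) atTop (nhds (0*0)) :=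
    h3.mul tendsto_one_div_atTop_nhds_zero_nat
  rw [mul_zero] at h4
  have h5 : Tendsto (fun N : ℕ => 1 - ((N:ℝ) * dd W N / W N) * (1/(N:ℝ))) atTop
      (nhds (1 - 0)) := tendsto_const_nhds.sub h4
  rw [sub_zero] at h5
  apply h5.congr'
  filter_upwards [htop.eventually_ge_atTop 1, eventually_ge_atTop 2] with N hW1 hN2
  have hWN : (0:ℝ) < W N := by linarith
  have ha : dd W N = W N - W (N-1) := by rw [dd, if_pos hN2]
  have hNR : ((N:ℝ)) ≠ 0 := by
    have : (0:ℕ) < N := by omega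
    positivity
  rw [ha]
  field_simp
  ring
end

section
/- The supremum, over all functions f : ℕ → ℂ with ‖f‖∞ ≤ 1, of | E^{bin}_{n≤N} ( E_{k≤n} f(k) ) − E_{n≤⌊N/2⌋} f(n) | tends to 0 as N → ∞. -/
open Filter Finset

lemma choose_m1 (N : ℕ) : ∑ i ∈ range (N+1), (i:ℝ) * (N.choose i) = N * 2^N / 2 := by
  cases N with
  | zero => simp
  | succ M =>
    rw [Finset.sum_range_succ']
    have h : ∀ i : ℕ, ((i:ℝ)+1) * ((M+1).choose (i+1)) = ((M:ℝ)+1) * (M.choose i) := by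
      intro i
      have h3 : (M+1) * M.choose i = (M+1).choose (i+1) * (i+1) := Nat.add_one_mul_choose_eq M i
      have h4 : ((M:ℝ)+1) * (M.choose i) = ((M+1).choose (i+1) : ℝ) * ((i:ℝ)+1) := by
        exact_mod_cast congrArg (Nat.cast (R := ℝ)) h3
      linarith [h4]
    have h4 : ∑ i ∈ range (M+1), (M.choose i : ℝ) = 2^M := by
      exact_mod_cast Nat.sum_range_choose M
    push_cast
    rw [Finset.sum_congr rfl (fun i _ => h i), ← Finset.mul_sum, h4]
    ring

lemma choose_m2 (N : ℕ) : ∑ i ∈ range (N+1), (i:ℝ)^2 * (N.choose i) = ((N:ℝ)^2 + N) * 2^N / 4 := by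
  cases N with
  | zero => simp
  | succ M =>
    rw [Finset.sum_range_succ']
    have h : ∀ i : ℕ, ((i:ℝ)+1)^2 * ((M+1).choose (i+1)) =
        ((M:ℝ)+1) * (((i:ℝ) * (M.choose i)) + (M.choose i)) := by
      intro i
      have h3 : (M+1) * M.choose i = (M+1).choose (i+1) * (i+1) := Nat.add_one_mul_choose_eq M i
      have h4 : ((M:ℝ)+1) * (M.choose i) = ((M+1).choose (i+1) : ℝ) * ((i:ℝ)+1) := by
        exact_mod_cast congrArg (Nat.cast (R := ℝ)) h3
      have h5 : ((i:ℝ)+1)^2 * ((M+1).choose (i+1)) = ((i:ℝ)+1) * (((M+1).choose (i+1) : ℝ) * ((i:ℝ)+1)) := by ring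
      rw [h5, ← h4]; ring
    have h4 : ∑ i ∈ range (M+1), (M.choose i : ℝ) = 2^M := by
      exact_mod_cast Nat.sum_range_choose M
    have h1 := choose_m1 M
    push_cast
    rw [Finset.sum_congr rfl (fun i _ => h i), ← Finset.mul_sum, Finset.sum_add_distrib, h1, h4]
    ring

lemma choose_var (N : ℕ) : ∑ i ∈ range (N+1), (2*(i:ℝ) - N)^2 * (N.choose i) = (N:ℝ) * 2^N := by
  have h1 := choose_m1 N
  have h2 := choose_m2 N
  have h0 : ∑ i ∈ range (N+1), ((N.choose i : ℝ)) = 2^N := by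
    exact_mod_cast Nat.sum_range_choose N
  have h : ∀ i ∈ range (N+1), (2*(i:ℝ) - N)^2 * (N.choose i) =
      4*((i:ℝ)^2 * (N.choose i)) - (4*(N:ℝ))*((i:ℝ) * (N.choose i)) + (N:ℝ)^2*(N.choose i) := by
    intro i _; ring
  rw [Finset.sum_congr rfl h, Finset.sum_add_distrib, Finset.sum_sub_distrib,
    ← Finset.mul_sum, ← Finset.mul_sum, ← Finset.mul_sum, h0, h1, h2]
  ring

lemma cesaro_norm_le (f : ℕ → ℂ) (hf : ∀ n, ‖f n‖ ≤ 1) (M : ℕ) : ‖cesaro f M‖ ≤ 1 := by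
  rcases Nat.eq_zero_or_pos M with h | h
  · subst h; simp [cesaro]
  · rw [cesaro]
    have h1 : ‖∑ n ∈ Finset.Icc 1 M, f n‖ ≤ M := by
      refine (norm_sum_le _ _).trans ?_
      calc ∑ n ∈ Finset.Icc 1 M, ‖f n‖ ≤ ∑ n ∈ Finset.Icc 1 M, 1 :=
            Finset.sum_le_sum (fun n _ => hf n)
        _ = M := by simp
    rw [norm_mul]
    have h2 : ‖(1 / (M:ℂ))‖ = 1 / (M:ℝ) := by
      rw [norm_div, norm_one, Complex.norm_natCast]
    rw [h2]
    rw [div_mul_eq_mul_div, one_mul, div_le_one (by positivity)]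
    exact h1

lemma cesaro_diff (f : ℕ → ℂ) (hf : ∀ n, ‖f n‖ ≤ 1) {m n : ℕ} (hm : 1 ≤ m) (hmn : m ≤ n) :
    ‖cesaro f n - cesaro f m‖ ≤ 2 * ((n:ℝ) - m) / n := by
  have hn : 1 ≤ n := hm.trans hmn
  have hmR : (0:ℝ) < m := by exact_mod_cast hm
  have hnR : (0:ℝ) < n := by exact_mod_cast hn
  have hmC : (m:ℂ) ≠ 0 := by exact_mod_cast hmR.ne'
  have hnC : (n:ℂ) ≠ 0 := by exact_mod_cast hnR.ne'
  have hsplit : ∑ k ∈ Finset.Icc 1 n, f k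
      = (∑ k ∈ Finset.Icc 1 m, f k) + ∑ k ∈ Finset.Ioc m n, f k := by
    rw [show Finset.Icc 1 n = Finset.Ioc 0 n by rfl, show Finset.Icc 1 m = Finset.Ioc 0 m by rfl]
    exact (Finset.sum_Ioc_consecutive _ (Nat.zero_le m) hmn).symm
  have key : cesaro f n - cesaro f m
      = (1/(n:ℂ) - 1/(m:ℂ)) * (∑ k ∈ Finset.Icc 1 m, f k)
        + (1/(n:ℂ)) * ∑ k ∈ Finset.Ioc m n, f k := by
    rw [cesaro, cesaro, hsplit]; ring
  have hA : ‖∑ k ∈ Finset.Icc 1 m, f k‖ ≤ m := by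
    refine (norm_sum_le _ _).trans ?_
    calc ∑ k ∈ Finset.Icc 1 m, ‖f k‖ ≤ ∑ k ∈ Finset.Icc 1 m, 1 :=
          Finset.sum_le_sum (fun k _ => hf k)
      _ = m := by simp
  have hB : ‖∑ k ∈ Finset.Ioc m n, f k‖ ≤ (n:ℝ) - m := by
    refine (norm_sum_le _ _).trans ?_
    calc ∑ k ∈ Finset.Ioc m n, ‖f k‖ ≤ ∑ k ∈ Finset.Ioc m n, 1 :=
          Finset.sum_le_sum (fun k _ => hf k)
      _ = (n:ℝ) - m := by
          rw [Finset.sum_const, Nat.card_Ioc, nsmul_eq_mul, mul_one, Nat.cast_sub hmn]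
  have hc : ‖(1/(n:ℂ) - 1/(m:ℂ))‖ = 1/(m:ℝ) - 1/(n:ℝ) := by
    have hcast : (1/(n:ℂ) - 1/(m:ℂ)) = Complex.ofReal (1/(n:ℝ) - 1/(m:ℝ)) := by
      push_cast; ring
    have hle : 1/(n:ℝ) - 1/(m:ℝ) ≤ 0 := by
      have h := one_div_le_one_div_of_le hmR (Nat.cast_le.mpr hmn : (m:ℝ) ≤ n)
      linarith
    rw [hcast, Complex.norm_real, Real.norm_eq_abs, abs_of_nonpos hle]
    ring
  calc ‖cesaro f n - cesaro f m‖
      ≤ ‖(1/(n:ℂ) - 1/(m:ℂ)) * (∑ k ∈ Finset.Icc 1 m, f k)‖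
        + ‖(1/(n:ℂ)) * ∑ k ∈ Finset.Ioc m n, f k‖ := by rw [key]; exact norm_add_le _ _
    _ ≤ (1/(m:ℝ) - 1/(n:ℝ)) * m + (1/(n:ℝ)) * ((n:ℝ) - m) := by
        rw [norm_mul, norm_mul, hc]
        have h1n : ‖(1/(n:ℂ))‖ = 1/(n:ℝ) := by
          rw [norm_div, norm_one, Complex.norm_natCast]
        rw [h1n]
        have hpos : (0:ℝ) ≤ 1/(m:ℝ) - 1/(n:ℝ) := by
          have := one_div_le_one_div_of_le hmR (Nat.cast_le.mpr hmn : (m:ℝ) ≤ n)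
          linarith
        exact add_le_add (mul_le_mul_of_nonneg_left hA hpos)
          (mul_le_mul_of_nonneg_left hB (by positivity))
    _ = 2 * ((n:ℝ) - m) / n := by field_simp; ring



lemma key_bound (N : ℕ) (hN : 2 ≤ N) (δ : ℝ) (hδ : 0 < δ)
    (f : ℕ → ℂ) (hf : ∀ n, ‖f n‖ ≤ 1) :
    ‖ebin (fun n => cesaro f n) N - cesaro f (N / 2)‖
      ≤ 4*δ + 4/(N:ℝ) + (2/δ^2)/(N:ℝ) + (1/2:ℝ)^N := by
  classical
  set M := N / 2 with hMdef
  have hM1 : 1 ≤ M := by omega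
  have hMN : 2 * M ≤ N ∧ N ≤ 2 * M + 1 := by omega
  have hNR : (0:ℝ) < N := by exact_mod_cast Nat.lt_of_lt_of_le (by norm_num) hN
  have hMR : (0:ℝ) < M := by exact_mod_cast hM1
  have h2C : (2:ℂ)^N ≠ 0 := pow_ne_zero _ two_ne_zero
  have h2R : (0:ℝ) < 2^N := by positivity
  -- sum of binomial coefficients over Icc 1 N
  have hins : Finset.range (N+1) = insert 0 (Finset.Icc 1 N) := by
    ext x; simp only [Finset.mem_range, Finset.mem_insert, Finset.mem_Icc]; omega
  have hchoose_nat : ∑ n ∈ Finset.Icc 1 N, N.choose n = 2^N - 1 := by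
    have h := Nat.sum_range_choose N
    rw [hins, Finset.sum_insert (by simp)] at h
    simp only [Nat.choose_zero_right] at h
    omega
  have hsumC : (∑ n ∈ Finset.Icc 1 N, (N.choose n : ℂ)) = 2^N - 1 := by
    have h : ((∑ n ∈ Finset.Icc 1 N, N.choose n : ℕ) : ℂ) = ((2^N - 1 : ℕ) : ℂ) := by
      rw [hchoose_nat]
    push_cast [Nat.cast_sub (Nat.one_le_two_pow)] at h
    simpa using h
  -- rewrite the difference
  have hB : ebin (fun n => cesaro f n) N - cesaro f M
      = (∑ n ∈ Finset.Icc 1 N, ((N.choose n : ℂ)/2^N) * (cesaro f n - cesaro f M))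
        - (1/2^N) * cesaro f M := by
    have e1 : ebin (fun n => cesaro f n) N
        = ∑ n ∈ Finset.Icc 1 N, ((N.choose n : ℂ)/2^N) * cesaro f n := by
      rw [ebin, Finset.mul_sum]
      exact Finset.sum_congr rfl (fun n _ => by ring)
    have e2 : ∑ n ∈ Finset.Icc 1 N, ((N.choose n : ℂ)/2^N) * (cesaro f n - cesaro f M)
        = (∑ n ∈ Finset.Icc 1 N, ((N.choose n : ℂ)/2^N) * cesaro f n)
          - ((2^N - 1)/2^N) * cesaro f M := by
      simp only [mul_sub]
      rw [Finset.sum_sub_distrib, ← Finset.sum_mul, ← Finset.sum_div, hsumC]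
    rw [e1, e2]
    have e3 : ((2:ℂ)^N - 1)/2^N = 1 - 1/2^N := by field_simp
    rw [e3]
    ring
  -- norms of the coefficients
  have hnormc : ∀ n : ℕ, ‖((N.choose n : ℂ)/2^N)‖ = (N.choose n : ℝ)/2^N := by
    intro n
    rw [norm_div, Complex.norm_natCast, norm_pow, Complex.norm_ofNat]
  -- first reduction to a real sum
  have hC : ‖ebin (fun n => cesaro f n) N - cesaro f M‖
      ≤ (∑ n ∈ Finset.Icc 1 N, ((N.choose n : ℝ)/2^N) * ‖cesaro f n - cesaro f M‖)
        + (1/2:ℝ)^N := by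
    rw [hB]
    refine (norm_sub_le _ _).trans (add_le_add ?_ ?_)
    · refine (norm_sum_le _ _).trans ?_
      refine le_of_eq (Finset.sum_congr rfl (fun n _ => ?_))
      rw [norm_mul, hnormc]
    · rw [norm_mul, norm_div, norm_one, norm_pow, Complex.norm_ofNat]
      calc (1/(2:ℝ)^N) * ‖cesaro f M‖ ≤ (1/(2:ℝ)^N) * 1 :=
            mul_le_mul_of_nonneg_left (cesaro_norm_le f hf M) (by positivity)
        _ = (1/2:ℝ)^N := by rw [mul_one, one_div, one_div, inv_pow]
  -- bounds on the Cesàro differences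
  have hb2 : ∀ n : ℕ, ‖cesaro f n - cesaro f M‖ ≤ 2 := by
    intro n
    calc ‖cesaro f n - cesaro f M‖ ≤ ‖cesaro f n‖ + ‖cesaro f M‖ := norm_sub_le _ _
      _ ≤ 2 := by linarith [cesaro_norm_le f hf n, cesaro_norm_le f hf M]
  have hbM : ∀ n ∈ Finset.Icc 1 N, ‖cesaro f n - cesaro f M‖ ≤ 2 * |(n:ℝ) - M| / M := by
    intro n hn
    have hn1 : 1 ≤ n := (Finset.mem_Icc.mp hn).1
    rcases le_total n M with h | h
    · have hd := cesaro_diff f hf hn1 h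
      have hnM : (n:ℝ) ≤ M := Nat.cast_le.mpr h
      rw [norm_sub_rev]
      calc ‖cesaro f M - cesaro f n‖ ≤ 2 * ((M:ℝ) - n) / M := hd
        _ = 2 * |(n:ℝ) - M| / M := by
            rw [abs_of_nonpos (by linarith : (n:ℝ) - M ≤ 0)]
            ring
    · have hd := cesaro_diff f hf hM1 h
      have hnM : (M:ℝ) ≤ n := Nat.cast_le.mpr h
      have hnR' : (0:ℝ) < n := by linarith
      calc ‖cesaro f n - cesaro f M‖ ≤ 2 * ((n:ℝ) - M) / n := hd
        _ ≤ 2 * ((n:ℝ) - M) / M := by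
            apply div_le_div_of_nonneg_left (by linarith) hMR hnM
        _ = 2 * |(n:ℝ) - M| / M := by rw [abs_of_nonneg (by linarith : (0:ℝ) ≤ (n:ℝ) - M)]
  -- nonnegativity and total mass of the weights
  have hq0 : ∀ n : ℕ, (0:ℝ) ≤ (N.choose n : ℝ)/2^N := fun n => by positivity
  have hqsum : ∑ n ∈ Finset.range (N+1), (N.choose n : ℝ)/2^N = 1 := by
    rw [← Finset.sum_div]
    have h : ∑ n ∈ Finset.range (N+1), (N.choose n : ℝ) = 2^N := by
      exact_mod_cast Nat.sum_range_choose N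
    rw [h]; field_simp
  have hvar : ∑ n ∈ Finset.range (N+1), ((N.choose n : ℝ)/2^N) * (2*(n:ℝ) - N)^2 = (N:ℝ) := by
    have h := choose_var N
    have e : ∑ n ∈ Finset.range (N+1), ((N.choose n : ℝ)/2^N) * (2*(n:ℝ) - N)^2
        = (∑ n ∈ Finset.range (N+1), (2*(n:ℝ) - N)^2 * (N.choose n : ℝ)) / 2^N := by
      rw [Finset.sum_div]
      exact Finset.sum_congr rfl (fun n _ => by ring)
    rw [e, h]
    field_simp
  have hsub : Finset.Icc 1 N ⊆ Finset.range (N+1) := by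
    intro x hx
    simp only [Finset.mem_Icc] at hx
    simp only [Finset.mem_range]
    omega
  set P : ℕ → Prop := fun n => |2*(n:ℝ) - N| ≤ δ*N with hPdef
  have hM4 : (N:ℝ)/4 ≤ M := by
    have h1 : (N:ℝ) ≤ 2*M + 1 := by exact_mod_cast hMN.2
    have h2 : (2:ℝ) ≤ N := by exact_mod_cast hN
    linarith
  -- near part
  have hnear : ∑ n ∈ (Finset.Icc 1 N).filter P,
      ((N.choose n : ℝ)/2^N) * ‖cesaro f n - cesaro f M‖ ≤ 4*δ + 4/(N:ℝ) := by
    have hcoef : (0:ℝ) ≤ (δ*N+1)/M := by positivity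
    have step1 : ∑ n ∈ (Finset.Icc 1 N).filter P,
        ((N.choose n : ℝ)/2^N) * ‖cesaro f n - cesaro f M‖
        ≤ ∑ n ∈ (Finset.Icc 1 N).filter P, ((N.choose n : ℝ)/2^N) * ((δ*N+1)/M) := by
      refine Finset.sum_le_sum (fun n hn => ?_)
      simp only [Finset.mem_filter] at hn
      refine mul_le_mul_of_nonneg_left ?_ (hq0 n)
      refine (hbM n hn.1).trans ?_
      have habs : |(N:ℝ) - 2*M| ≤ 1 := by
        rw [abs_le]
        refine ⟨?_, ?_⟩
        · have h := hMN.1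
          have : (2*M : ℝ) ≤ N := by exact_mod_cast h
          linarith
        · have h := hMN.2
          have : (N:ℝ) ≤ 2*M + 1 := by exact_mod_cast h
          linarith
      have h2nM : 2 * |(n:ℝ) - M| ≤ δ*N + 1 := by
        have h1 : |2*(n:ℝ) - 2*M| ≤ |2*(n:ℝ) - N| + |(N:ℝ) - 2*M| := by
          calc |2*(n:ℝ) - 2*M| = |(2*(n:ℝ) - N) + ((N:ℝ) - 2*M)| := by ring_nf
            _ ≤ _ := abs_add_le _ _
        have h2 : 2 * |(n:ℝ) - M| = |2*(n:ℝ) - 2*M| := by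
          rw [show 2*(n:ℝ) - 2*M = 2*((n:ℝ) - M) by ring, abs_mul, abs_two]
        have h3 : |2*(n:ℝ) - N| ≤ δ*N := hn.2
        linarith
      exact (div_le_div_iff_of_pos_right hMR).mpr h2nM
    have step2 : ∑ n ∈ (Finset.Icc 1 N).filter P, ((N.choose n : ℝ)/2^N) * ((δ*N+1)/M)
        ≤ (δ*N+1)/M := by
      rw [← Finset.sum_mul]
      have hmass : ∑ n ∈ (Finset.Icc 1 N).filter P, ((N.choose n : ℝ)/2^N) ≤ 1 := by
        rw [← hqsum]
        refine Finset.sum_le_sum_of_subset_of_nonneg ?_ (fun i _ _ => hq0 i)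
        exact (Finset.filter_subset _ _).trans hsub
      calc (∑ n ∈ (Finset.Icc 1 N).filter P, ((N.choose n : ℝ)/2^N)) * ((δ*N+1)/M)
          ≤ 1 * ((δ*N+1)/M) := mul_le_mul_of_nonneg_right hmass hcoef
        _ = (δ*N+1)/M := one_mul _
    have step3 : (δ*N+1)/M ≤ 4*δ + 4/(N:ℝ) := by
      have h1 : (δ*N+1)/M ≤ (δ*N+1)/((N:ℝ)/4) :=
        div_le_div_of_nonneg_left (by positivity) (by positivity) hM4
      have h2 : (δ*N+1)/((N:ℝ)/4) = 4*δ + 4/(N:ℝ) := by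
        field_simp
      linarith
    linarith
  -- far part
  have hfar : ∑ n ∈ (Finset.Icc 1 N).filter (fun n => ¬ P n),
      ((N.choose n : ℝ)/2^N) * ‖cesaro f n - cesaro f M‖ ≤ (2/δ^2)/(N:ℝ) := by
    have hd2 : (0:ℝ) < (δ*N)^2 := by positivity
    have step1 : ∑ n ∈ (Finset.Icc 1 N).filter (fun n => ¬ P n),
        ((N.choose n : ℝ)/2^N) * ‖cesaro f n - cesaro f M‖
        ≤ ∑ n ∈ (Finset.Icc 1 N).filter (fun n => ¬ P n),
            (2/(δ*N)^2) * (((N.choose n : ℝ)/2^N) * (2*(n:ℝ) - N)^2) := by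
      refine Finset.sum_le_sum (fun n hn => ?_)
      simp only [Finset.mem_filter] at hn
      have hgt : δ*N < |2*(n:ℝ) - N| := not_le.mp hn.2
      have hsq : (δ*N)^2 ≤ (2*(n:ℝ) - N)^2 := by
        have h0 : (0:ℝ) ≤ δ*N := by positivity
        nlinarith [sq_abs (2*(n:ℝ) - N), abs_nonneg (2*(n:ℝ) - N)]
      have hqn := hq0 n
      have hbn := hb2 n
      have hbn0 : (0:ℝ) ≤ ‖cesaro f n - cesaro f M‖ := norm_nonneg _
      have h2X : (2:ℝ)/(δ*N)^2 * (((N.choose n : ℝ)/2^N) * (2*(n:ℝ) - N)^2)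
          = 2 * (((N.choose n : ℝ)/2^N) * (2*(n:ℝ) - N)^2) / (δ*N)^2 := by ring
      rw [h2X, le_div_iff₀ hd2]
      nlinarith [mul_le_mul_of_nonneg_left hbn hqn,
        mul_le_mul_of_nonneg_left hsq (mul_nonneg (by norm_num : (0:ℝ) ≤ 2) hqn), hd2.le]
    have step2 : ∑ n ∈ (Finset.Icc 1 N).filter (fun n => ¬ P n),
        (2/(δ*N)^2) * (((N.choose n : ℝ)/2^N) * (2*(n:ℝ) - N)^2)
        ≤ (2/(δ*N)^2) * (N:ℝ) := by
      rw [← Finset.mul_sum]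
      refine mul_le_mul_of_nonneg_left ?_ (by positivity)
      exact le_trans (Finset.sum_le_sum_of_subset_of_nonneg
        ((Finset.filter_subset _ _).trans hsub) (fun i _ _ => by positivity)) hvar.le
    have step3 : (2/(δ*N)^2) * (N:ℝ) = (2/δ^2)/(N:ℝ) := by
      field_simp
    linarith
  -- combine
  have hsplit := Finset.sum_filter_add_sum_filter_not (Finset.Icc 1 N) P
    (fun n => ((N.choose n : ℝ)/2^N) * ‖cesaro f n - cesaro f M‖)
  have : ∑ n ∈ Finset.Icc 1 N, ((N.choose n : ℝ)/2^N) * ‖cesaro f n - cesaro f M‖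
      ≤ (4*δ + 4/(N:ℝ)) + (2/δ^2)/(N:ℝ) := by
    rw [← hsplit]
    exact add_le_add hnear hfar
  calc ‖ebin (fun n => cesaro f n) N - cesaro f M‖
      ≤ (∑ n ∈ Finset.Icc 1 N, ((N.choose n : ℝ)/2^N) * ‖cesaro f n - cesaro f M‖)
        + (1/2:ℝ)^N := hC
    _ ≤ 4*δ + 4/(N:ℝ) + (2/δ^2)/(N:ℝ) + (1/2:ℝ)^N := by linarith

/-- Theorem 4.3: binomial means of Cesàro averages agree with the Cesàro
average at scale `⌊N/2⌋`, uniformly over `f` with `‖f‖_∞ ≤ 1`. -/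
theorem stmt11 :
    ∀ ε : ℝ, 0 < ε → ∀ᶠ N : ℕ in atTop, ∀ f : ℕ → ℂ, (∀ n, ‖f n‖ ≤ 1) →
      ‖ebin (fun n => cesaro f n) N - cesaro f (N / 2)‖ < ε := by
  intro ε hε
  set δ : ℝ := ε/16 with hδdef
  have hδ : 0 < δ := by positivity
  have h0 : Tendsto (fun N : ℕ => 4/(N:ℝ) + (2/δ^2)/(N:ℝ) + (1/2:ℝ)^N) atTop (nhds 0) := by
    have t1 : Tendsto (fun N : ℕ => 4/(N:ℝ)) atTop (nhds 0) :=
      tendsto_const_div_atTop_nhds_zero_nat 4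
    have t2 : Tendsto (fun N : ℕ => (2/δ^2)/(N:ℝ)) atTop (nhds 0) :=
      tendsto_const_div_atTop_nhds_zero_nat (2/δ^2)
    have t3 : Tendsto (fun N : ℕ => (1/2:ℝ)^N) atTop (nhds 0) :=
      tendsto_pow_atTop_nhds_zero_of_lt_one (by norm_num) (by norm_num)
    simpa using (t1.add t2).add t3
  have hlt : (0:ℝ) < ε - 4*δ := by rw [hδdef]; linarith
  have hev : ∀ᶠ N : ℕ in atTop, 4/(N:ℝ) + (2/δ^2)/(N:ℝ) + (1/2:ℝ)^N < ε - 4*δ :=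
    h0.eventually_lt_const hlt
  filter_upwards [hev, eventually_ge_atTop 2] with N h1 h2
  intro f hf
  have hkey := key_bound N h2 δ hδ f hf
  linarith
end

section
/- The supremum, over all functions f : ℕ → ℂ with ‖f‖∞ ≤ 1, of | E_{n≤N} ( E^{2bin}_{k≤n} f(k) ) − E_{n≤N} f(n) | tends to 0 as N → ∞. -/
open Filter Finset

lemma cast_sub_le_abs (a b : ℕ) : ((a - b : ℕ) : ℝ) ≤ |(a:ℝ) - (b:ℝ)| := by
  rcases le_total b a with h | h
  · rw [Nat.cast_sub h]; exact le_abs_self _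
  · simp [Nat.sub_eq_zero_of_le h, abs_nonneg]

lemma pascal_partial (N j : ℕ) :
    ∑ i ∈ range (j+1), Nat.choose (N+2) i + Nat.choose (N+1) j
      = 2 * ∑ i ∈ range (j+1), Nat.choose (N+1) i := by
  induction j with
  | zero => simp
  | succ j ih =>
    rw [sum_range_succ, sum_range_succ (f := fun i => Nat.choose (N+1) i)]
    have h : Nat.choose (N+2) (j+1) = Nat.choose (N+1) j + Nat.choose (N+1) (j+1) :=
      Nat.choose_succ_succ (N+1) j
    omega

lemma T_closed (j N : ℕ) (h : j ≤ N) :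
    ∑ n ∈ Icc j N, (Nat.choose n j : ℝ) / 2 ^ (n+1)
      = 1 - (∑ i ∈ range (j+1), (Nat.choose (N+1) i : ℝ)) / 2 ^ (N+1) := by
  induction N, h using Nat.le_induction with
  | base =>
    rw [Finset.Icc_self, Finset.sum_singleton, Nat.choose_self]
    have h1 : ∑ i ∈ range (j+1), Nat.choose (j+1) i = 2^(j+1) - 1 := by
      have h2 := Nat.sum_range_choose (j+1)
      rw [sum_range_succ] at h2
      simp only [Nat.choose_self] at h2
      omega
    have h2 : (∑ i ∈ range (j+1), (Nat.choose (j+1) i : ℝ)) = 2^(j+1) - 1 := by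
      rw [← Nat.cast_sum, h1]
      have h3 : (1:ℕ) ≤ 2^(j+1) := Nat.one_le_two_pow
      push_cast [h3]
      ring
    rw [h2]
    have hp : (0:ℝ) < 2^(j+1) := by positivity
    field_simp
    push_cast; ring
  | succ N hN ih =>
    rw [Finset.sum_Icc_succ_top (by omega : j ≤ N + 1), ih]
    have hpR : (∑ i ∈ range (j+1), (Nat.choose (N+1+1) i : ℝ)) + Nat.choose (N+1) j
        = 2 * ∑ i ∈ range (j+1), (Nat.choose (N+1) i:ℝ) := by
      exact_mod_cast pascal_partial N j
    linear_combination ((1:ℝ)/2^(N+2)) * hpR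


lemma sum_ichoose (M : ℕ) :
    (∑ i ∈ range (M+1), (i:ℝ) * Nat.choose M i) * 2 = M * 2 ^ M := by
  cases M with
  | zero => simp
  | succ m =>
    have h1 : ∑ i ∈ range (m+2), (i:ℝ) * Nat.choose (m+1) i
        = ∑ k ∈ range (m+1), ((k:ℝ)+1) * Nat.choose (m+1) (k+1) := by
      rw [Finset.sum_range_succ' (fun i => (i:ℝ) * Nat.choose (m+1) i) (m+1)]
      push_cast
      simp
    have h2 : ∀ k ∈ range (m+1), ((k:ℝ)+1) * Nat.choose (m+1) (k+1)
        = ((m:ℝ)+1) * Nat.choose m k := by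
      intro k _
      have h := Nat.add_one_mul_choose_eq m k
      have h' : ((m+1) * Nat.choose m k : ℕ) = (Nat.choose (m+1) (k+1) * (k+1) : ℕ) := h
      have := congrArg (Nat.cast (R := ℝ)) h'
      push_cast at this
      linarith
    rw [h1, Finset.sum_congr rfl h2, ← Finset.mul_sum]
    have h0 : ∑ k ∈ range (m+1), (Nat.choose m k : ℝ) = 2 ^ m := by
      exact_mod_cast congrArg (Nat.cast (R := ℝ)) (Nat.sum_range_choose m)
    rw [h0]
    push_cast
    ring

lemma sum_i2choose (M : ℕ) :
    (∑ i ∈ range (M+1), (i:ℝ) * ((i:ℝ)-1) * Nat.choose M i) * 4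
      = M * ((M:ℝ)-1) * 2 ^ M := by
  match M with
  | 0 => simp
  | 1 => norm_num [Finset.sum_range_succ]
  | (m+2) =>
    have h1 : ∑ i ∈ range (m+3), (i:ℝ) * ((i:ℝ)-1) * Nat.choose (m+2) i
        = ∑ k ∈ range (m+1), ((k:ℝ)+2) * ((k:ℝ)+1) * Nat.choose (m+2) (k+2) := by
      rw [Finset.sum_range_succ' (fun i => (i:ℝ) * ((i:ℝ)-1) * Nat.choose (m+2) i) (m+2),
        Finset.sum_range_succ'
          (fun i => ((i+1:ℕ):ℝ) * (((i+1:ℕ):ℝ)-1) * Nat.choose (m+2) (i+1)) (m+1)]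
      push_cast
      ring_nf
    have h2 : ∀ k ∈ range (m+1), ((k:ℝ)+2) * ((k:ℝ)+1) * Nat.choose (m+2) (k+2)
        = ((m:ℝ)+2) * ((m:ℝ)+1) * Nat.choose m k := by
      intro k _
      have ha : ((m+2) * Nat.choose (m+1) (k+1) : ℕ) = (Nat.choose (m+2) (k+2) * (k+2) : ℕ) :=
        Nat.add_one_mul_choose_eq (m+1) (k+1)
      have hb : ((m+1) * Nat.choose m k : ℕ) = (Nat.choose (m+1) (k+1) * (k+1) : ℕ) :=
        Nat.add_one_mul_choose_eq m k
      have ha' := congrArg (Nat.cast (R := ℝ)) ha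
      have hb' := congrArg (Nat.cast (R := ℝ)) hb
      push_cast at ha' hb'
      nlinarith [ha', hb']
    rw [h1, Finset.sum_congr rfl h2, ← Finset.mul_sum]
    have h0 : ∑ k ∈ range (m+1), (Nat.choose m k : ℝ) = 2 ^ m := by
      exact_mod_cast congrArg (Nat.cast (R := ℝ)) (Nat.sum_range_choose m)
    rw [h0]
    push_cast
    ring

lemma sum_sq_dev (M : ℕ) :
    ∑ i ∈ range (M+1), (Nat.choose M i : ℝ) * ((M:ℝ) - 2*i)^2 = (M:ℝ) * 2 ^ M := by
  have h0 : ∑ i ∈ range (M+1), (Nat.choose M i : ℝ) = 2 ^ M := by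
    exact_mod_cast congrArg (Nat.cast (R := ℝ)) (Nat.sum_range_choose M)
  have h1 := sum_ichoose M
  have h2 := sum_i2choose M
  have e : ∀ i ∈ range (M+1), (Nat.choose M i : ℝ) * ((M:ℝ) - 2*i)^2
      = (M:ℝ)^2 * (Nat.choose M i : ℝ) + (-4*(M:ℝ)+4) * ((i:ℝ) * Nat.choose M i)
        + 4 * ((i:ℝ)*((i:ℝ)-1)*Nat.choose M i) := by
    intro i _; ring
  rw [Finset.sum_congr rfl e, Finset.sum_add_distrib, Finset.sum_add_distrib,
    ← Finset.mul_sum, ← Finset.mul_sum, ← Finset.mul_sum, h0]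
  linear_combination ((-2:ℝ)*(M:ℝ) + 2) * h1 + h2

lemma abs_dev_le (M : ℕ) :
    ∑ i ∈ range (M+1), (Nat.choose M i : ℝ) * |(M:ℝ) - 2*i|
      ≤ Real.sqrt M * 2 ^ M := by
  set S := ∑ i ∈ range (M+1), (Nat.choose M i : ℝ) * |(M:ℝ) - 2*i| with hSdef
  have hS : 0 ≤ S := Finset.sum_nonneg fun i _ => mul_nonneg (by positivity) (abs_nonneg _)
  have cs := Finset.sum_mul_sq_le_sq_mul_sq (range (M+1))
      (fun i => Real.sqrt (Nat.choose M i))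
      (fun i => Real.sqrt (Nat.choose M i) * |(M:ℝ) - 2*i|)
  have l1 : ∑ i ∈ range (M+1),
      Real.sqrt (Nat.choose M i) * (Real.sqrt (Nat.choose M i) * |(M:ℝ) - 2*i|) = S := by
    refine Finset.sum_congr rfl fun i _ => ?_
    rw [← mul_assoc, Real.mul_self_sqrt (by positivity)]
  have l2 : ∑ i ∈ range (M+1), (Real.sqrt (Nat.choose M i))^2 = 2 ^ M := by
    have : ∀ i ∈ range (M+1), (Real.sqrt (Nat.choose M i))^2 = (Nat.choose M i : ℝ) :=
      fun i _ => Real.sq_sqrt (by positivity)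
    rw [Finset.sum_congr rfl this]
    exact_mod_cast congrArg (Nat.cast (R := ℝ)) (Nat.sum_range_choose M)
  have l3 : ∑ i ∈ range (M+1), (Real.sqrt (Nat.choose M i) * |(M:ℝ) - 2*i|)^2
      = M * 2 ^ M := by
    have : ∀ i ∈ range (M+1), (Real.sqrt (Nat.choose M i) * |(M:ℝ) - 2*i|)^2
        = (Nat.choose M i : ℝ) * ((M:ℝ) - 2*i)^2 := by
      intro i _
      rw [mul_pow, Real.sq_sqrt (by positivity), sq_abs]
    rw [Finset.sum_congr rfl this]
    exact sum_sq_dev M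
  rw [l1, l2, l3] at cs
  have hfin : S = Real.sqrt (S^2) := (Real.sqrt_sq hS).symm
  rw [hfin]
  refine le_trans (Real.sqrt_le_sqrt cs) ?_
  rw [show (2:ℝ)^M * ((M:ℝ) * 2^M) = (Real.sqrt (M:ℝ) * 2^M)^2 by
    rw [mul_pow, Real.sq_sqrt (Nat.cast_nonneg M)]; ring]
  rw [Real.sqrt_sq (by positivity)]

lemma count1 (N i : ℕ) :
    (((Icc 1 N).filter (fun k => 2*i ≤ k)).card : ℝ) ≤ |((N:ℝ)+1) - 2*i| := by
  have hsub : (Icc 1 N).filter (fun k => 2*i ≤ k) ⊆ Icc (max 1 (2*i)) N := by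
    intro k hk
    simp only [mem_filter, mem_Icc] at hk
    simp only [mem_Icc]
    omega
  have hcard : ((Icc 1 N).filter (fun k => 2*i ≤ k)).card ≤ (N+1) - 2*i := by
    have h := Finset.card_le_card hsub
    rw [Nat.card_Icc] at h
    omega
  calc (((Icc 1 N).filter (fun k => 2*i ≤ k)).card : ℝ)
      ≤ (((N+1) - 2*i : ℕ) : ℝ) := Nat.cast_le.2 hcard
    _ ≤ |((N+1 : ℕ):ℝ) - ((2*i : ℕ):ℝ)| := cast_sub_le_abs _ _
    _ = |((N:ℝ)+1) - 2*i| := by push_cast; ring_nf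

lemma count2 (N i : ℕ) :
    (((Icc (N+1) (2*N)).filter (fun k => k+1 ≤ 2*i)).card : ℝ) ≤ |((N:ℝ)+1) - 2*i| := by
  have hsub : (Icc (N+1) (2*N)).filter (fun k => k+1 ≤ 2*i) ⊆ Icc (N+1) (2*i-1) := by
    intro k hk
    simp only [mem_filter, mem_Icc] at hk
    simp only [mem_Icc]
    omega
  have hcard : ((Icc (N+1) (2*N)).filter (fun k => k+1 ≤ 2*i)).card ≤ (2*i) - (N+1) := by
    have h := Finset.card_le_card hsub
    rw [Nat.card_Icc] at h
    omega
  calc (((Icc (N+1) (2*N)).filter (fun k => k+1 ≤ 2*i)).card : ℝ)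
      ≤ (((2*i) - (N+1) : ℕ) : ℝ) := Nat.cast_le.2 hcard
    _ ≤ |((2*i : ℕ):ℝ) - ((N+1 : ℕ):ℝ)| := cast_sub_le_abs _ _
    _ = |((N:ℝ)+1) - 2*i| := by rw [abs_sub_comm]; push_cast; ring_nf

lemma mid_bound (N : ℕ) :
    ∑ k ∈ Icc 1 N, (∑ i ∈ range (k/2+1), (Nat.choose (N+1) i : ℝ)) / 2^(N+1)
      ≤ Real.sqrt ((N:ℝ)+1) := by
  have key : ∀ k ∈ Icc 1 N, ∑ i ∈ range (k/2+1), (Nat.choose (N+1) i : ℝ)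
      = ∑ i ∈ range (N+2), if 2*i ≤ k then (Nat.choose (N+1) i : ℝ) else 0 := by
    intro k hk
    simp only [mem_Icc] at hk
    rw [← Finset.sum_filter]
    apply Finset.sum_congr _ (fun _ _ => rfl)
    ext a
    simp only [mem_range, mem_filter]
    omega
  have step1 : ∑ k ∈ Icc 1 N, (∑ i ∈ range (k/2+1), (Nat.choose (N+1) i : ℝ)) / 2^(N+1)
      = (∑ i ∈ range (N+2), ∑ k ∈ Icc 1 N,
          if 2*i ≤ k then (Nat.choose (N+1) i : ℝ) else 0) / 2^(N+1) := by
    rw [← Finset.sum_div, Finset.sum_congr rfl key, Finset.sum_comm]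
  rw [step1]
  have step2 : (∑ i ∈ range (N+2), ∑ k ∈ Icc 1 N,
        if 2*i ≤ k then (Nat.choose (N+1) i : ℝ) else 0)
      ≤ ∑ i ∈ range (N+2), (Nat.choose (N+1) i : ℝ) * |((N:ℝ)+1) - 2*i| := by
    refine Finset.sum_le_sum fun i _ => ?_
    rw [← Finset.sum_filter, Finset.sum_const, nsmul_eq_mul, mul_comm]
    exact mul_le_mul_of_nonneg_left (count1 N i) (by positivity)
  have step3 : ∑ i ∈ range (N+2), (Nat.choose (N+1) i : ℝ) * |((N:ℝ)+1) - 2*i|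
      ≤ Real.sqrt ((N:ℝ)+1) * 2^(N+1) := by
    have h := abs_dev_le (N+1)
    push_cast at h
    convert h using 2 <;> push_cast <;> ring_nf
  have hp : (0:ℝ) < 2^(N+1) := by positivity
  calc (∑ i ∈ range (N+2), ∑ k ∈ Icc 1 N,
        if 2*i ≤ k then (Nat.choose (N+1) i : ℝ) else 0) / 2^(N+1)
      ≤ (Real.sqrt ((N:ℝ)+1) * 2^(N+1)) / 2^(N+1) := by
        apply div_le_div_of_nonneg_right (le_trans step2 step3) hp.le |>.trans_eq rfl
    _ = Real.sqrt ((N:ℝ)+1) := by field_simp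

lemma third_bound (N : ℕ) :
    ∑ k ∈ Icc (N+1) (2*N), (1 - (∑ i ∈ range (k/2+1), (Nat.choose (N+1) i : ℝ)) / 2^(N+1))
      ≤ Real.sqrt ((N:ℝ)+1) := by
  have htot : ∑ i ∈ range (N+2), (Nat.choose (N+1) i : ℝ) = 2^(N+1) := by
    exact_mod_cast congrArg (Nat.cast (R := ℝ)) (Nat.sum_range_choose (N+1))
  have key : ∀ k ∈ Icc (N+1) (2*N),
      1 - (∑ i ∈ range (k/2+1), (Nat.choose (N+1) i : ℝ)) / 2^(N+1)
      = (∑ i ∈ range (N+2), if k+1 ≤ 2*i then (Nat.choose (N+1) i : ℝ) else 0) / 2^(N+1) := by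
    intro k hk
    simp only [mem_Icc] at hk
    have hsplit := Finset.sum_filter_add_sum_filter_not (range (N+2))
      (fun i => 2*i ≤ k) (fun i => (Nat.choose (N+1) i : ℝ))
    have hfil : (range (N+2)).filter (fun i => 2*i ≤ k) = range (k/2+1) := by
      ext a
      simp only [mem_range, mem_filter]
      omega
    have hnot : ∑ i ∈ (range (N+2)).filter (fun i => ¬ 2*i ≤ k), (Nat.choose (N+1) i : ℝ)
        = ∑ i ∈ range (N+2), if k+1 ≤ 2*i then (Nat.choose (N+1) i : ℝ) else 0 := by
      rw [← Finset.sum_filter]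
      apply Finset.sum_congr _ (fun _ _ => rfl)
      ext a
      simp only [mem_filter, mem_range]
      omega
    rw [hfil, hnot] at hsplit
    have hp : (0:ℝ) < 2^(N+1) := by positivity
    field_simp
    linarith [hsplit, htot]
  rw [Finset.sum_congr rfl key]
  have step1 : ∑ k ∈ Icc (N+1) (2*N),
      (∑ i ∈ range (N+2), if k+1 ≤ 2*i then (Nat.choose (N+1) i : ℝ) else 0) / 2^(N+1)
      = (∑ i ∈ range (N+2), ∑ k ∈ Icc (N+1) (2*N),
          if k+1 ≤ 2*i then (Nat.choose (N+1) i : ℝ) else 0) / 2^(N+1) := by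
    rw [← Finset.sum_div, Finset.sum_comm]
  rw [step1]
  have step2 : (∑ i ∈ range (N+2), ∑ k ∈ Icc (N+1) (2*N),
        if k+1 ≤ 2*i then (Nat.choose (N+1) i : ℝ) else 0)
      ≤ ∑ i ∈ range (N+2), (Nat.choose (N+1) i : ℝ) * |((N:ℝ)+1) - 2*i| := by
    refine Finset.sum_le_sum fun i _ => ?_
    rw [← Finset.sum_filter, Finset.sum_const, nsmul_eq_mul, mul_comm]
    exact mul_le_mul_of_nonneg_left (count2 N i) (by positivity)
  have step3 : ∑ i ∈ range (N+2), (Nat.choose (N+1) i : ℝ) * |((N:ℝ)+1) - 2*i|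
      ≤ Real.sqrt ((N:ℝ)+1) * 2^(N+1) := by
    have h := abs_dev_le (N+1)
    push_cast at h
    convert h using 2 <;> push_cast <;> ring_nf
  have hp : (0:ℝ) < 2^(N+1) := by positivity
  calc (∑ i ∈ range (N+2), ∑ k ∈ Icc (N+1) (2*N),
        if k+1 ≤ 2*i then (Nat.choose (N+1) i : ℝ) else 0) / 2^(N+1)
      ≤ (Real.sqrt ((N:ℝ)+1) * 2^(N+1)) / 2^(N+1) :=
        div_le_div_of_nonneg_right (le_trans step2 step3) hp.le |>.trans_eq rfl
    _ = Real.sqrt ((N:ℝ)+1) := by field_simp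

lemma delta_sum (N : ℕ) :
    ∑ k ∈ Icc 1 (2*N), (if k % 2 = 1 then ((1:ℝ)/2)^(k/2+1) else 0) = 1 - (1/2)^N := by
  induction N with
  | zero => simp
  | succ n ih =>
    have h2 : 2*(n+1) = (2*n+1) + 1 := by ring
    rw [h2, Finset.sum_Icc_succ_top (by omega), Finset.sum_Icc_succ_top (by omega), ih]
    have e1 : (2*n+1) % 2 = 1 := by omega
    have e2 : (2*n+1) / 2 = n := by omega
    have e3 : (2*n+1+1) % 2 = 0 := by omega
    rw [e1, e2, e3]
    norm_num
    ring

section Main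

variable (N : ℕ)

/-- weight of `f k` in the Cesàro average of `e2bin f`. -/
noncomputable def wgt (N k : ℕ) : ℝ :=
  ∑ n ∈ Icc ((k+1)/2) N, (Nat.choose n (k/2) : ℝ) / 2^(n+1)

noncomputable def phi (N j : ℕ) : ℝ :=
  (∑ i ∈ range (j+1), (Nat.choose (N+1) i : ℝ)) / 2^(N+1)

noncomputable def del (k : ℕ) : ℝ := if k % 2 = 1 then ((1:ℝ)/2)^(k/2+1) else 0

lemma wgt_eq (N k : ℕ) (hk1 : 1 ≤ k) (hk2 : k ≤ 2*N) :
    wgt N k = (1 - phi N (k/2)) - del k := by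
  have hT := T_closed (k/2) N (by omega)
  unfold wgt phi del
  rcases Nat.even_or_odd k with he | ho
  · have h1 : (k+1)/2 = k/2 := by
      obtain ⟨m, hm⟩ := he; omega
    have h2 : ¬ (k % 2 = 1) := by
      obtain ⟨m, hm⟩ := he; omega
    rw [h1, if_neg h2, hT]
    ring
  · have h1 : (k+1)/2 = k/2 + 1 := by
      obtain ⟨m, hm⟩ := ho; omega
    have h2 : k % 2 = 1 := by
      obtain ⟨m, hm⟩ := ho; omega
    have hj : k/2 ≤ N := by omega
    have hins : Icc (k/2) N = insert (k/2) (Icc (k/2 + 1) N) := by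
      ext a
      simp only [mem_Icc, mem_insert]
      omega
    have hnm : k/2 ∉ Icc (k/2 + 1) N := by simp
    rw [hins, Finset.sum_insert hnm, Nat.choose_self] at hT
    rw [h1, if_pos h2]
    rw [Nat.cast_one] at hT
    have : (1:ℝ)/2^(k/2+1) = ((1:ℝ)/2)^(k/2+1) := by
      rw [div_pow, one_pow]
    linarith [hT]

lemma phi_nonneg (N j : ℕ) : 0 ≤ phi N j := by
  unfold phi
  positivity

lemma phi_le_one (N j : ℕ) (h : j ≤ N+1) : phi N j ≤ 1 := by
  unfold phi
  rw [div_le_one (by positivity)]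
  have htot : ∑ i ∈ range (N+2), (Nat.choose (N+1) i : ℝ) = 2^(N+1) := by
    exact_mod_cast congrArg (Nat.cast (R := ℝ)) (Nat.sum_range_choose (N+1))
  rw [← htot]
  apply Finset.sum_le_sum_of_subset_of_nonneg
  · exact Finset.range_subset_range.2 (by omega)
  · intro i _ _; positivity

lemma del_nonneg (k : ℕ) : 0 ≤ del k := by
  unfold del
  split <;> positivity

lemma key_pointwise (N k : ℕ) (hk1 : 1 ≤ k) (hk2 : k ≤ 2*N) :
    |wgt N k - (if k ≤ N then (1:ℝ) else 0)|
      ≤ del k + (if k ≤ N then phi N (k/2) else 1 - phi N (k/2)) := by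
  rw [wgt_eq N k hk1 hk2]
  have h0 := phi_nonneg N (k/2)
  have h1 := phi_le_one N (k/2) (by omega)
  have h2 := del_nonneg k
  split <;> rw [abs_le] <;> constructor <;> nlinarith

lemma tv_bound (hN : 1 ≤ N) :
    ∑ k ∈ Icc 1 (2*N), |wgt N k - (if k ≤ N then (1:ℝ) else 0)|
      ≤ 1 + 2 * Real.sqrt ((N:ℝ)+1) := by
  have hle : ∑ k ∈ Icc 1 (2*N), |wgt N k - (if k ≤ N then (1:ℝ) else 0)|
      ≤ ∑ k ∈ Icc 1 (2*N), (del k + (if k ≤ N then phi N (k/2) else 1 - phi N (k/2))) := by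
    refine Finset.sum_le_sum fun k hk => ?_
    simp only [mem_Icc] at hk
    exact key_pointwise N k hk.1 hk.2
  refine hle.trans ?_
  rw [Finset.sum_add_distrib]
  have hd : ∑ k ∈ Icc 1 (2*N), del k ≤ 1 := by
    unfold del
    rw [delta_sum N]
    have : (0:ℝ) ≤ (1/2)^N := by positivity
    linarith
  have hsplit : ∑ k ∈ Icc 1 (2*N), (if k ≤ N then phi N (k/2) else 1 - phi N (k/2))
      = ∑ k ∈ Icc 1 N, phi N (k/2) + ∑ k ∈ Icc (N+1) (2*N), (1 - phi N (k/2)) := by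
    have hunion : Icc 1 (2*N) = Icc 1 N ∪ Icc (N+1) (2*N) := by
      ext a; simp only [mem_Icc, mem_union]; omega
    have hdisj : Disjoint (Icc 1 N) (Icc (N+1) (2*N)) := by
      rw [Finset.disjoint_left]
      intro a ha hb
      simp only [mem_Icc] at ha hb
      omega
    rw [hunion, Finset.sum_union hdisj]
    congr 1
    · refine Finset.sum_congr rfl fun k hk => ?_
      simp only [mem_Icc] at hk
      rw [if_pos hk.2]
    · refine Finset.sum_congr rfl fun k hk => ?_
      simp only [mem_Icc] at hk
      rw [if_neg (by omega)]
  rw [hsplit]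
  have hm := mid_bound N
  have ht := third_bound N
  unfold phi
  linarith [hm, ht]

lemma swap_sum (f : ℕ → ℂ) :
    ∑ n ∈ Icc 1 N, e2bin f n = ∑ k ∈ Icc 1 (2*N), ((wgt N k : ℝ) : ℂ) * f k := by
  unfold e2bin
  have step1 : ∀ n ∈ Icc 1 N, (1 / 2 ^ (n + 1) : ℂ) * ∑ k ∈ Icc 1 (2 * n),
        (Nat.choose n (k / 2) : ℂ) * f k
      = ∑ k ∈ Icc 1 (2 * n), ((Nat.choose n (k / 2) : ℂ) / 2^(n+1)) * f k := by
    intro n _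
    rw [Finset.mul_sum]
    refine Finset.sum_congr rfl fun k _ => ?_
    ring
  rw [Finset.sum_congr rfl step1]
  rw [Finset.sum_comm' (s' := fun k => Icc ((k+1)/2) N) (t' := Icc 1 (2*N))
    (by
      intro n k
      simp only [mem_Icc]
      omega)]
  refine Finset.sum_congr rfl fun k _ => ?_
  rw [← Finset.sum_mul]
  congr 1
  unfold wgt
  push_cast
  rfl

lemma cesaro_eq (f : ℕ → ℂ) :
    cesaro f N = (1 / (N:ℂ)) * ∑ k ∈ Icc 1 (2*N),
      (((if k ≤ N then (1:ℝ) else 0) : ℝ) : ℂ) * f k := by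
  unfold cesaro
  congr 1
  rw [← Finset.sum_filter_add_sum_filter_not (Icc 1 (2*N)) (fun k => k ≤ N)]
  have hfil : (Icc 1 (2*N)).filter (fun k => k ≤ N) = Icc 1 N := by
    ext a; simp only [mem_filter, mem_Icc]; omega
  have h1 : ∑ k ∈ (Icc 1 (2*N)).filter (fun k => k ≤ N),
      (((if k ≤ N then (1:ℝ) else 0) : ℝ) : ℂ) * f k
      = ∑ k ∈ Icc 1 N, f k := by
    rw [hfil]
    refine Finset.sum_congr rfl fun k hk => ?_
    simp only [mem_Icc] at hk
    rw [if_pos hk.2]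
    simp
  have h2 : ∑ k ∈ (Icc 1 (2*N)).filter (fun k => ¬ k ≤ N),
      (((if k ≤ N then (1:ℝ) else 0) : ℝ) : ℂ) * f k = 0 := by
    refine Finset.sum_eq_zero fun k hk => ?_
    simp only [mem_filter] at hk
    rw [if_neg hk.2]
    simp
  rw [h1, h2, add_zero]

lemma main_bound (hN : 1 ≤ N) (f : ℕ → ℂ) (hf : ∀ n, ‖f n‖ ≤ 1) :
    ‖cesaro (fun n => e2bin f n) N - cesaro f N‖
      ≤ (1 + 2 * Real.sqrt ((N:ℝ)+1)) / N := by
  have hNpos : (0:ℝ) < N := by exact_mod_cast hN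
  have e1 : cesaro (fun n => e2bin f n) N
      = (1 / (N:ℂ)) * ∑ k ∈ Icc 1 (2*N), ((wgt N k : ℝ) : ℂ) * f k := by
    unfold cesaro
    rw [swap_sum]
  rw [e1, cesaro_eq, ← mul_sub, ← Finset.sum_sub_distrib]
  have e2 : ∀ k, ((wgt N k : ℝ) : ℂ) * f k
      - (((if k ≤ N then (1:ℝ) else 0) : ℝ) : ℂ) * f k
      = (((wgt N k - (if k ≤ N then (1:ℝ) else 0) : ℝ)) : ℂ) * f k := by
    intro k
    push_cast
    ring
  rw [norm_mul]
  have hnn : ‖(1 / (N:ℂ))‖ = 1 / (N:ℝ) := by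
    rw [norm_div, norm_one, Complex.norm_natCast]
  rw [hnn]
  have hbound : ‖∑ k ∈ Icc 1 (2*N), (((wgt N k : ℝ) : ℂ) * f k
      - (((if k ≤ N then (1:ℝ) else 0) : ℝ) : ℂ) * f k)‖
      ≤ 1 + 2 * Real.sqrt ((N:ℝ)+1) := by
    refine le_trans (norm_sum_le _ _) ?_
    refine le_trans ?_ (tv_bound N hN)
    refine Finset.sum_le_sum fun k _ => ?_
    rw [e2 k, norm_mul, Complex.norm_real]
    calc |wgt N k - (if k ≤ N then (1:ℝ) else 0)| * ‖f k‖
        ≤ |wgt N k - (if k ≤ N then (1:ℝ) else 0)| * 1 :=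
          mul_le_mul_of_nonneg_left (hf k) (abs_nonneg _)
      _ = _ := mul_one _
  calc (1 / (N:ℝ)) * ‖∑ k ∈ Icc 1 (2*N), _‖
      ≤ (1 / (N:ℝ)) * (1 + 2 * Real.sqrt ((N:ℝ)+1)) := by
        exact mul_le_mul_of_nonneg_left hbound (by positivity)
    _ = (1 + 2 * Real.sqrt ((N:ℝ)+1)) / N := by ring

end Main

theorem stmt12' :
    ∀ ε : ℝ, 0 < ε → ∀ᶠ N : ℕ in atTop, ∀ f : ℕ → ℂ, (∀ n, ‖f n‖ ≤ 1) →
      ‖cesaro (fun n => e2bin f n) N - cesaro f N‖ < ε := by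
  intro ε hε
  have hev : ∀ᶠ N : ℕ in atTop, (⌈(6/ε)^2⌉₊ + 1 : ℕ) ≤ N := eventually_ge_atTop _
  filter_upwards [hev, eventually_ge_atTop 1] with N hN h1 f hf
  have hNpos : (0:ℝ) < N := by exact_mod_cast h1
  have hNR : (6/ε)^2 < (N:ℝ) := by
    calc (6/ε)^2 ≤ (⌈(6/ε)^2⌉₊ : ℝ) := Nat.le_ceil _
      _ < N := by exact_mod_cast (by omega : ⌈(6/ε)^2⌉₊ < N)
  have hsqrtN : 6/ε < Real.sqrt N := by
    have h6 : (0:ℝ) ≤ 6/ε ∨ 6/ε < 0 := le_or_gt 0 _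
    rcases h6 with h | h
    · have := Real.sqrt_lt_sqrt (by positivity) hNR
      rwa [Real.sqrt_sq h] at this
    · exact h.trans_le (Real.sqrt_nonneg _)
  have hsq : (0:ℝ) < Real.sqrt N := by
    have : (0:ℝ) < (N:ℝ) := hNpos
    positivity
  have hs1 : (1:ℝ) ≤ Real.sqrt N := by
    have h := Real.sqrt_le_sqrt (show (1:ℝ) ≤ (N:ℝ) by exact_mod_cast h1)
    rwa [Real.sqrt_one] at h
  have hs2 : Real.sqrt ((N:ℝ)+1) ≤ 2 * Real.sqrt N := by
    have h := Real.sqrt_le_sqrt (show (N:ℝ)+1 ≤ 4*(N:ℝ) by nlinarith [hNpos, (show (1:ℝ) ≤ (N:ℝ) by exact_mod_cast h1)])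
    rwa [show (4:ℝ)*(N:ℝ) = (2:ℝ)^2 * (N:ℝ) by ring, Real.sqrt_mul (by positivity) _,
      Real.sqrt_sq (by norm_num : (0:ℝ) ≤ 2)] at h
  have hmulself : Real.sqrt N * Real.sqrt N = (N:ℝ) :=
    Real.mul_self_sqrt (Nat.cast_nonneg N)
  have h6 : 6 < ε * Real.sqrt N := by
    rw [div_lt_iff₀ hε] at hsqrtN
    linarith
  have h7 : 6 * Real.sqrt N < ε * (N:ℝ) := by nlinarith [hmulself, hsq, h6]
  refine lt_of_le_of_lt (main_bound N h1 f hf) ?_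
  rw [div_lt_iff₀ hNpos]
  linarith


/-- Corollary 4.4: Cesàro averages of parity-neutral binomial means
agree with Cesàro averages, uniformly over `f` with `‖f‖_∞ ≤ 1`. -/
theorem stmt12 :
    ∀ ε : ℝ, 0 < ε → ∀ᶠ N : ℕ in atTop, ∀ f : ℕ → ℂ, (∀ n, ‖f n‖ ≤ 1) →
      ‖cesaro (fun n => e2bin f n) N - cesaro f N‖ < ε := stmt12'
end

section
/- Let W ∈ 𝒲 and let s : ℕ → ℕ be a non-decreasing function with s(1) = 1, s(N) → ∞, and s(N) − s(N−1) ∈ {0,1} for all N ≥ 2. Define ŝ(k) = max{ n ∈ ℕ : s(n) ≤ k }. Suppose lim_{N→∞} Δ(W∘ŝ)(N)/(W∘ŝ)(N) = 0. Then the supremum, over all functions f : ℕ → ℂ with ‖f‖∞ ≤ 1, of | E^W_{n≤N} f(s(n)) − E^{W∘ŝ}_{k≤s(N)} f(k) | tends to 0 as N → ∞. -/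
open Filter Finset

/-- `ŝ(k) = max{n : s(n) ≤ k}`, realized as a supremum in `ℕ`. -/
noncomputable def hatS (s : ℕ → ℕ) (k : ℕ) : ℕ := sSup {n : ℕ | s n ≤ k}


/-- Auxiliary: the discrete derivative telescopes. -/
lemma sum_dd_eq (g : ℕ → ℝ) : ∀ M, 1 ≤ M → ∑ k ∈ Finset.Icc 1 M, dd g k = g M := by
  intro M hM
  induction M with
  | zero => omega
  | succ M ih =>
    rcases Nat.lt_or_ge 1 (M+1) with h | h
    · rw [Finset.sum_Icc_succ_top (by omega), ih (by omega), dd, if_pos (by omega)]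
      simp
    · have : M = 0 := by omega
      subst this
      simp [dd]

lemma abs_dd_sum_le (g : ℕ → ℝ) (K M : ℕ) (hK : 1 ≤ K) (hKM : K ≤ M)
    (hpos : ∀ k, K < k → 0 ≤ dd g k) :
    ∑ k ∈ Finset.Icc 1 M, |dd g k|
      ≤ g M + ∑ k ∈ Finset.Icc 1 K, (|dd g k| - dd g k) := by
  have hIcc : ∀ x : ℕ, Finset.Icc 1 x = Finset.Ioc 0 x := by
    intro x; rw [← Finset.Icc_add_one_left_eq_Ioc]; rfl
  have hsplit : ∑ k ∈ Finset.Icc 1 M, (|dd g k| - dd g k)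
      = ∑ k ∈ Finset.Icc 1 K, (|dd g k| - dd g k)
        + ∑ k ∈ Finset.Ioc K M, (|dd g k| - dd g k) := by
    rw [hIcc M, hIcc K, Finset.sum_Ioc_consecutive _ (Nat.zero_le K) hKM]
  have hzero : ∑ k ∈ Finset.Ioc K M, (|dd g k| - dd g k) = 0 :=
    Finset.sum_eq_zero fun k hk => by
      rw [abs_of_nonneg (hpos k (Finset.mem_Ioc.mp hk).1)]; ring
  have hexp : ∑ k ∈ Finset.Icc 1 M, |dd g k|
      = ∑ k ∈ Finset.Icc 1 M, dd g k + ∑ k ∈ Finset.Icc 1 M, (|dd g k| - dd g k) := by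
    rw [← Finset.sum_add_distrib]
    exact Finset.sum_congr rfl fun k _ => by ring
  rw [hexp, sum_dd_eq g M (le_trans hK hKM), hsplit, hzero, add_zero]

section hatprops
variable {s : ℕ → ℕ} (hmono : Monotone s) (hs1 : s 1 = 1)
  (hsinf : Tendsto s atTop atTop)

include hsinf in
lemma hatS_bdd (k : ℕ) : BddAbove {n : ℕ | s n ≤ k} := by
  obtain ⟨M, hM⟩ := (Filter.tendsto_atTop.mp hsinf (k+1)).exists_forall_of_atTop
  refine ⟨M, fun n hn => ?_⟩
  by_contra h
  push_neg at h
  exact absurd (hM n h.le) (by simpa using Nat.lt_succ_of_le hn)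

include hsinf in
lemma le_hatS {n k : ℕ} (h : s n ≤ k) : n ≤ hatS s k :=
  le_csSup (hatS_bdd hsinf k) h

include hs1 hsinf in
lemma s_hatS_le {k : ℕ} (hk : 1 ≤ k) : s (hatS s k) ≤ k :=
  Nat.sSup_mem ⟨1, by simpa [Set.mem_setOf_eq, hs1]⟩ (hatS_bdd hsinf k)

omit hmono in
include hs1 hsinf in
lemma hatS_mono' {k l : ℕ} (hk : 1 ≤ k) (hkl : k ≤ l) : hatS s k ≤ hatS s l :=
  le_hatS hsinf (le_trans (s_hatS_le hs1 hsinf hk) hkl)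

end hatprops

lemma s_le_self {s : ℕ → ℕ} (hs1 : s 1 = 1)
    (hstep : ∀ N : ℕ, 2 ≤ N → s N = s (N - 1) ∨ s N = s (N - 1) + 1) :
    ∀ k, 1 ≤ k → s k ≤ k := by
  intro k hk
  induction k with
  | zero => omega
  | succ k ih =>
    rcases Nat.lt_or_ge 1 (k+1) with h | h
    · rcases hstep (k+1) (by omega) with h' | h' <;> simp at h' <;> omega
    · have : k = 0 := by omega
      subst this; simp [hs1]

lemma key_identity (W : ℕ → ℝ) (s : ℕ → ℕ) (hmono : Monotone s) (hs1 : s 1 = 1)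
    (hsinf : Tendsto s atTop atTop)
    (hstep : ∀ N : ℕ, 2 ≤ N → s N = s (N - 1) ∨ s N = s (N - 1) + 1)
    (f : ℕ → ℂ) :
    ∀ N, 1 ≤ N →
      ∑ n ∈ Finset.Icc 1 N, (dd W n : ℂ) * f (s n)
        = ∑ k ∈ Finset.Icc 1 (s N), (dd (fun k => W (hatS s k)) k : ℂ) * f k
          + ((W N - W (hatS s (s N)) : ℝ) : ℂ) * f (s N) := by
  intro N hN
  induction N, hN using Nat.le_induction with
  | base =>
    simp only [hs1, Finset.Icc_self, Finset.sum_singleton, dd, if_neg (by omega : ¬ 2 ≤ 1)]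
    push_cast
    ring
  | succ N hN ih =>
    have hsN1 : 1 ≤ s N := hs1 ▸ hmono hN
    have hstepN := hstep (N+1) (by omega)
    simp only [Nat.add_sub_cancel] at hstepN
    rw [Finset.sum_Icc_succ_top (by omega : 1 ≤ N + 1), ih]
    rcases hstepN with h | h
    · rw [h]
      have : dd W (N+1) = W (N+1) - W N := by rw [dd, if_pos (by omega)]; simp
      rw [this]
      push_cast
      ring
    · have hhat : hatS s (s N) = N := by
        refine le_antisymm ?_ (le_hatS hsinf le_rfl)
        by_contra hc
        push_neg at hc
        have h5 : s (N+1) ≤ s (hatS s (s N)) := hmono hc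
        have h6 := s_hatS_le hs1 hsinf hsN1
        omega
      rw [h, Finset.sum_Icc_succ_top (by omega : 1 ≤ s N + 1)]
      have h1 : dd W (N+1) = W (N+1) - W N := by rw [dd, if_pos (by omega)]; simp
      have h2 : dd (fun k => W (hatS s k)) (s N + 1)
          = W (hatS s (s N + 1)) - W (hatS s (s N)) := by
        rw [dd, if_pos (by omega)]; simp
      rw [h1, h2, hhat]
      push_cast
      ring

set_option maxHeartbeats 1000000 in
/-- Lemma 4.9, change of variables with `ŝ`:
`E^W_{n≤N} f(s(n)) = E^{W∘ŝ}_{k≤s(N)} f(k) + o(1)` uniformly over `f` with `‖f‖_∞ ≤ 1`. -/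
theorem stmt16 (W : ℕ → ℝ) (hW : memW W)
    (s : ℕ → ℕ) (hmono : Monotone s) (hs1 : s 1 = 1)
    (hsinf : Tendsto s atTop atTop)
    (hstep : ∀ N : ℕ, 2 ≤ N → s N = s (N - 1) ∨ s N = s (N - 1) + 1)
    (hd : Tendsto (fun N : ℕ => dd (fun k => W (hatS s k)) N / W (hatS s N))
      atTop (nhds 0)) :
    ∀ ε : ℝ, 0 < ε → ∀ᶠ N : ℕ in atTop, ∀ f : ℕ → ℂ, (∀ n, ‖f n‖ ≤ 1) →
      ‖wAvg W (fun n => f (s n)) N - wAvg (fun k => W (hatS s k)) f (s N)‖ < ε := by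
  classical
  obtain ⟨hWnn, ⟨N₀, hWmono⟩, hWinf⟩ := hW
  set V : ℕ → ℝ := fun k => W (hatS s k) with hVdef
  set K : ℕ := N₀ + 1 with hKdef
  set C : ℝ := ∑ k ∈ Finset.Icc 1 K, (|dd V k| - dd V k) with hCdef
  have hsle : ∀ k, 1 ≤ k → s k ≤ k := s_le_self hs1 hstep
  have hhat_ge : ∀ k, 1 ≤ k → k ≤ hatS s k := fun k hk => le_hatS hsinf (hsle k hk)
  have hVmono : ∀ m n, K ≤ m → m ≤ n → V m ≤ V n := by
    intro m n hm hmn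
    exact hWmono _ _ (le_trans (by omega) (hhat_ge m (by omega)))
      (hatS_mono' hs1 hsinf (by omega) hmn)
  have hCnn : 0 ≤ C := Finset.sum_nonneg fun k _ => by
    have := le_abs_self (dd V k); linarith
  have hddnn : ∀ k, K < k → 0 ≤ dd V k := by
    intro k hk
    rw [dd, if_pos (by omega)]
    have := hVmono (k-1) k (by omega) (by omega)
    linarith
  have hVinf : Tendsto V atTop atTop := by
    apply hWinf.comp
    apply tendsto_atTop_mono' atTop ?_ tendsto_id
    filter_upwards [eventually_ge_atTop 1] with k hk
    exact hhat_ge k hk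
  have hbinf : Tendsto (fun N => V (s N)) atTop atTop := hVinf.comp hsinf
  have hr : Tendsto (fun N => dd V (s N) / V (s N)) atTop (nhds 0) := hd.comp hsinf
  intro ε hε
  set δ : ℝ := min (1/2) (ε/7) with hδdef
  have hδpos : 0 < δ := lt_min (by norm_num) (by linarith)
  have hδhalf : δ ≤ 1/2 := min_le_left _ _
  have hδε : δ ≤ ε/7 := min_le_right _ _
  have E3 : ∀ᶠ N in atTop, |dd V (s N) / V (s N)| < δ := by
    have := hr.eventually (Metric.ball_mem_nhds (0:ℝ) hδpos)
    filter_upwards [this] with N hN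
    rw [Real.dist_eq, sub_zero] at hN
    exact hN
  filter_upwards [hsinf.eventually_ge_atTop (K + 2), eventually_ge_atTop (N₀ + 1),
    E3, hbinf.eventually_ge_atTop (C + 1)] with N h1 h2 h3 h4
  intro f hf
  have hN1 : 1 ≤ N := by omega
  have hsN2 : 2 ≤ s N := by omega
  set a : ℝ := W N with hadef
  set b : ℝ := V (s N) with hbdef
  set c : ℝ := V (s N - 1) with hcdef
  set D : ℝ := dd V (s N) with hDdef
  have hb1 : (1:ℝ) ≤ b := by linarith
  have hbpos : (0:ℝ) < b := by linarith
  have hD : D = b - c := by rw [hDdef, dd, if_pos hsN2]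
  have hcb : c ≤ b := hVmono (s N - 1) (s N) (by omega) (by omega)
  have hDnn : 0 ≤ D := by rw [hD]; linarith
  have hDlt : D < δ * b := by
    have habs : |D / b| < δ := h3
    rw [abs_of_nonneg (div_nonneg hDnn hbpos.le)] at habs
    calc D = D / b * b := by field_simp
    _ < δ * b := mul_lt_mul_of_pos_right habs hbpos
  have hca : c ≤ a := by
    have hle : hatS s (s N - 1) ≤ N := by
      by_contra hc
      push_neg at hc
      have h5 : s N ≤ s (hatS s (s N - 1)) := hmono hc.le
      have h6 := s_hatS_le hs1 hsinf (k := s N - 1) (by omega)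
      omega
    exact hWmono _ _ (le_trans (by omega) (hhat_ge (s N - 1) (by omega))) hle
  have hab : a ≤ b := hWmono N (hatS s (s N)) (by omega) (le_hatS hsinf le_rfl)
  have hahalf : b/2 ≤ a := by nlinarith
  have hapos : 0 < a := by linarith
  have haC : (a:ℂ) ≠ 0 := by exact_mod_cast hapos.ne'
  have hbC : (b:ℂ) ≠ 0 := by exact_mod_cast hbpos.ne'
  set S2 : ℂ := ∑ k ∈ Finset.Icc 1 (s N), (dd V k : ℂ) * f k with hS2def
  have hkey : ∑ n ∈ Finset.Icc 1 N, (dd W n : ℂ) * f (s n)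
      = S2 + ((a - b : ℝ) : ℂ) * f (s N) :=
    key_identity W s hmono hs1 hsinf hstep f N hN1
  have hS2norm : ‖S2‖ ≤ b + C := by
    calc ‖S2‖ ≤ ∑ k ∈ Finset.Icc 1 (s N), ‖(dd V k : ℂ) * f k‖ := norm_sum_le _ _
    _ ≤ ∑ k ∈ Finset.Icc 1 (s N), |dd V k| := by
        apply Finset.sum_le_sum
        intro k _
        rw [norm_mul, Complex.norm_real, Real.norm_eq_abs]
        calc |dd V k| * ‖f k‖ ≤ |dd V k| * 1 :=
          mul_le_mul_of_nonneg_left (hf k) (abs_nonneg _)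
        _ = |dd V k| := mul_one _
    _ ≤ b + C := abs_dd_sum_le V K (s N) (by omega) (by omega) hddnn
  have heq : wAvg W (fun n => f (s n)) N - wAvg V f (s N)
      = ((1/a - 1/b : ℝ) : ℂ) * S2 + (((a - b)/a : ℝ) : ℂ) * f (s N) := by
    rw [wAvg, wAvg, hkey]
    push_cast
    rw [← hadef, ← hbdef, ← hS2def]
    field_simp
    ring
  rw [heq]
  have hbound : ‖((1/a - 1/b : ℝ) : ℂ) * S2 + (((a - b)/a : ℝ) : ℂ) * f (s N)‖
      ≤ (1/a - 1/b) * (b + C) + (b - a)/a := by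
    refine (norm_add_le _ _).trans ?_
    rw [norm_mul, norm_mul, Complex.norm_real, Complex.norm_real,
      Real.norm_eq_abs, Real.norm_eq_abs]
    have h1ab : (0:ℝ) ≤ 1/a - 1/b := by
      rw [sub_nonneg]
      exact one_div_le_one_div_of_le hapos hab
    rw [abs_of_nonneg h1ab]
    have h2ab : |(a - b)/a| = (b - a)/a := by
      rw [abs_div, abs_of_pos hapos, abs_of_nonpos (by linarith : a - b ≤ 0)]
      ring_nf
    rw [h2ab]
    have t1 : (1/a - 1/b) * ‖S2‖ ≤ (1/a - 1/b) * (b + C) :=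
      mul_le_mul_of_nonneg_left hS2norm h1ab
    have t2 : (b - a)/a * ‖f (s N)‖ ≤ (b - a)/a * 1 :=
      mul_le_mul_of_nonneg_left (hf (s N)) (div_nonneg (by linarith) hapos.le)
    linarith
  refine lt_of_le_of_lt hbound ?_
  have hexpand : (1/a - 1/b) * (b + C) + (b - a)/a
      = ((b - a) * (b + C) + (b - a) * b) / (a * b) := by
    field_simp
  rw [hexpand, div_lt_iff₀ (by positivity : (0:ℝ) < a * b)]
  have hba : b - a ≤ D := by linarith
  have hA : (b - a) * (b + C) ≤ D * (2*b) := mul_le_mul hba (by linarith) (by linarith) hDnn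
  have hB : (b - a) * b ≤ D * b := mul_le_mul_of_nonneg_right hba hbpos.le
  have hC2 : D * (2*b) ≤ δ * b * (2*b) := mul_le_mul_of_nonneg_right hDlt.le (by linarith)
  have hD2 : D * b ≤ δ * b * b := mul_le_mul_of_nonneg_right hDlt.le hbpos.le
  have hE : ε * ((b/2) * b) ≤ ε * (a * b) :=
    mul_le_mul_of_nonneg_left (mul_le_mul_of_nonneg_right hahalf hbpos.le) hε.le
  have hF : δ * (b*b) ≤ (ε/7) * (b*b) := mul_le_mul_of_nonneg_right hδε (by positivity)
  have hG : 0 < ε * (b*b) := by positivity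
  nlinarith [hA, hB, hC2, hD2, hE, hF, hG]
end

section
/- Let x₀ ∈ ℝ and let h : ℝ → ℝ be twice differentiable on [x₀,∞), with h'(x) → ∞ as x → ∞, and with h'' positive and non-increasing on [x₀,∞). Then there exist infinitely many N ∈ ℕ such that the distance from h'(N) to the nearest integer is at most h''(N). -/
open Filter Finset

/-- Lemma 5.13, Diophantine approximation of `h'`:
if `h' → ∞` and `h''` is positive and non-increasing on `[x₀,∞)`, then for infinitely
many `N ∈ ℕ` the distance from `h'(N)` to the nearest integer is at most `h''(N)`. -/
theorem stmt19 (x₀ : ℝ) (h h' h'' : ℝ → ℝ)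
    (hd1 : ∀ x ∈ Set.Ici x₀, HasDerivAt h (h' x) x)
    (hd2 : ∀ x ∈ Set.Ici x₀, HasDerivAt h' (h'' x) x)
    (hinf : Tendsto h' atTop atTop)
    (hpos : ∀ x ∈ Set.Ici x₀, 0 < h'' x)
    (hanti : AntitoneOn h'' (Set.Ici x₀)) :
    {N : ℕ | ∃ m : ℤ, |h' (N : ℝ) - (m : ℝ)| ≤ h'' (N : ℝ)}.Infinite := by
  by_contra hfin
  rw [Set.not_infinite] at hfin
  obtain ⟨K, hK⟩ := hfin.bddAbove
  have hbad : ∀ N : ℕ, max (K + 1) (Nat.ceil x₀) ≤ N → ∀ m : ℤ,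
      h'' (N : ℝ) < |h' (N : ℝ) - (m : ℝ)| := by
    intro N hN m
    by_contra hle
    push_neg at hle
    have hmem : N ∈ {N : ℕ | ∃ m : ℤ, |h' (N : ℝ) - (m : ℝ)| ≤ h'' (N : ℝ)} := ⟨m, hle⟩
    have := hK hmem
    omega
  set N₂ : ℕ := max (K + 1) (Nat.ceil x₀) with hN₂def
  have hx₀ : ∀ N : ℕ, N₂ ≤ N → x₀ ≤ (N : ℝ) := by
    intro N hN
    have h1 : Nat.ceil x₀ ≤ N := le_trans (le_max_right _ _) hN
    calc x₀ ≤ (Nat.ceil x₀ : ℝ) := Nat.le_ceil x₀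
      _ ≤ (N : ℝ) := by exact_mod_cast h1
  have ht : Tendsto (fun n : ℕ => h' (n : ℝ)) atTop atTop :=
    hinf.comp tendsto_natCast_atTop_atTop
  set m : ℤ := Int.floor (h' (N₂ : ℝ)) + 1 with hmdef
  have hm : h' (N₂ : ℝ) < (m : ℝ) := by
    rw [hmdef]
    push_cast
    exact Int.lt_floor_add_one (h' (N₂ : ℝ))
  have hex : ∃ n : ℕ, N₂ < n ∧ (m : ℝ) ≤ h' (n : ℝ) := by
    obtain ⟨n, hn1, hn2⟩ := ((ht.eventually_ge_atTop (m : ℝ)).and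
      (eventually_gt_atTop N₂)).exists
    exact ⟨n, hn2, hn1⟩
  set n := Nat.find hex with hndef
  obtain ⟨hn1, hn2⟩ := Nat.find_spec hex
  set N : ℕ := n - 1 with hNdef
  have hnN : n = N + 1 := by omega
  have hNge : N₂ ≤ N := by
    omega
  have hlt : h' (N : ℝ) < (m : ℝ) := by
    rcases eq_or_lt_of_le hNge with heq | hlt
    · rw [← heq]; exact hm
    · have := Nat.find_min hex (show N < n by omega)
      push_neg at this
      exact this hlt
  have hge : (m : ℝ) ≤ h' ((N : ℝ) + 1) := by
    have : ((n : ℕ) : ℝ) = (N : ℝ) + 1 := by rw [hnN]; push_cast; ring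
    rwa [this] at hn2
  have hx₀N : x₀ ≤ (N : ℝ) := hx₀ N hNge
  have hx₀N1 : x₀ ≤ (N : ℝ) + 1 := by linarith
  -- MVT on [N, N+1]
  obtain ⟨ξ, hξmem, hξ⟩ := exists_hasDerivAt_eq_slope h' h''
    (show (N : ℝ) < (N : ℝ) + 1 by linarith)
    (fun x hx => ((hd2 x (le_trans hx₀N hx.1)).continuousAt).continuousWithinAt)
    (fun x hx => hd2 x (le_trans hx₀N (le_of_lt hx.1)))
  have hξval : h'' ξ = h' ((N : ℝ) + 1) - h' (N : ℝ) := by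
    rw [hξ]; field_simp; ring
  have hanti' : h'' ξ ≤ h'' (N : ℝ) :=
    hanti hx₀N (le_trans hx₀N (le_of_lt hξmem.1)) (le_of_lt hξmem.1)
  have hpos1 : 0 < h'' ((N : ℝ) + 1) := hpos _ hx₀N1
  have hbadN := hbad N hNge m
  have hbadN1 := hbad (N + 1) (by omega) m
  rw [show (((N + 1 : ℕ) : ℝ)) = (N : ℝ) + 1 by push_cast; ring] at hbadN1
  rw [abs_of_neg (by linarith)] at hbadN
  rw [abs_of_nonneg (by linarith)] at hbadN1
  linarith
end
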